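/- arXiv:2010.05283 — 5 statements merged into one kernel-verified Lean document; each statement's English description precedes it below -/
import Mathlib

section
/- Let a(T) = T^n over a field F and r, n ≥ 1. Then f_a(T_1,…,T_r) = Σ_{0 ≤ j_1,…,j_r ≤ n-1, j_1+⋯+j_r = (r-1)(n-1)} T_1^{j_1}⋯T_r^{j_r}. That is, f_{T^n} is the sum of all monomials in T_1,…,T_r with each exponent at most n-1 and total degree (r-1)(n-1). -/
/-- The polynomial `f_a` attached to a monic polynomial `a` of degree `n`
with roots `α 0, …, α (n-1)` (with multiplicity):
`f_a(T_1,…,T_r) = Σ_{1=i_0 ≤ i_1 ≤ ⋯ ≤ i_r = n} ∏_{j=1}^r ∏_{i ∉ [i_{j-1}, i_j]} (T_j - α_i)`. -/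
noncomputable def fa (F : Type*) [CommRing F] (r n : ℕ) (α : Fin n → F) :
    MvPolynomial (Fin r) F :=
  ∑ c ∈ Finset.univ.filter (fun c : Fin (r + 1) → Fin n =>
      (∀ i j, i ≤ j → c i ≤ c j) ∧ (c 0 : ℕ) = 0 ∧ (c (Fin.last r) : ℕ) = n - 1),
    ∏ j : Fin r,
      ∏ i ∈ Finset.univ.filter (fun i : Fin n =>
          ¬(c (Fin.castSucc j) ≤ i ∧ i ≤ c (Fin.succ j))),
        (MvPolynomial.X j - MvPolynomial.C (α i))

/-- Partial sums of `n - 1 - d`. -/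
def faSS (n r : ℕ) (d : Fin r → Fin n) (j : ℕ) : ℕ :=
  ∑ m ∈ Finset.range j, (n - 1 - if h : m < r then (d ⟨m, h⟩ : ℕ) else 0)

lemma faSS_mono (n r : ℕ) (d : Fin r → Fin n) : Monotone (faSS n r d) := fun _ _ h =>
  Finset.sum_le_sum_of_subset (Finset.range_subset_range.2 h)

lemma faSS_succ (n r : ℕ) (d : Fin r → Fin n) (k : Fin r) :
    faSS n r d ((k : ℕ) + 1) = faSS n r d k + (n - 1 - (d k : ℕ)) := by
  rw [faSS, Finset.sum_range_succ, dif_pos k.isLt, Fin.eta, faSS]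

lemma faSS_last (n r : ℕ) (hr : 1 ≤ r) (hn : 1 ≤ n) (d : Fin r → Fin n)
    (hd : ∑ i, (d i : ℕ) = (r - 1) * (n - 1)) : faSS n r d r = n - 1 := by
  have h1 : faSS n r d r
      = r * (n - 1) - ∑ m ∈ Finset.range r, (if h : m < r then (d ⟨m, h⟩ : ℕ) else 0) := by
    rw [faSS, Finset.sum_tsub_distrib, Finset.sum_const, Finset.card_range, smul_eq_mul]
    intro m hm
    rw [Finset.mem_range] at hm
    rw [dif_pos hm]
    have := (d ⟨m, hm⟩).isLt; omega
  have h2 : ∑ m ∈ Finset.range r, (if h : m < r then (d ⟨m, h⟩ : ℕ) else 0)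
      = ∑ i, (d i : ℕ) := by
    rw [← Fin.sum_univ_eq_sum_range (fun m => if h : m < r then (d ⟨m, h⟩ : ℕ) else 0) r]
    exact Finset.sum_congr rfl fun i _ => by rw [dif_pos i.isLt, Fin.eta]
  have h3 : (r - 1) * (n - 1) = r * (n - 1) - (n - 1) := Nat.sub_one_mul r (n - 1)
  have h4 : n - 1 ≤ r * (n - 1) := Nat.le_mul_of_pos_left (n - 1) hr
  rw [h1, h2, hd, h3]
  omega

/-- Extension of a chain to ℕ. -/
def faCC (n r : ℕ) (c : Fin (r + 1) → Fin n) (m : ℕ) : ℕ :=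
  (c ⟨min m r, by omega⟩ : ℕ)

lemma faCC_mono (n r : ℕ) (c : Fin (r + 1) → Fin n) (hc : ∀ i j, i ≤ j → c i ≤ c j) :
    Monotone (faCC n r c) := fun i j h =>
  hc _ _ (by rw [Fin.mk_le_mk]; omega)

lemma faCC_fin (n r : ℕ) (c : Fin (r + 1) → Fin n) (j : Fin (r + 1)) :
    faCC n r c (j : ℕ) = (c j : ℕ) := by
  unfold faCC
  congr 1
  exact congr_arg c (Fin.ext (by have := j.isLt; simp; omega))

lemma faCC_succ (n r : ℕ) (c : Fin (r + 1) → Fin n) (k : Fin r) :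
    faCC n r c ((k : ℕ) + 1) = (c k.succ : ℕ) := by
  have h : ((k.succ : Fin (r + 1)) : ℕ) = (k : ℕ) + 1 := Fin.val_succ k
  rw [← h, faCC_fin]

lemma faCC_castSucc (n r : ℕ) (c : Fin (r + 1) → Fin n) (k : Fin r) :
    faCC n r c (k : ℕ) = (c k.castSucc : ℕ) := by
  have h : ((k.castSucc : Fin (r + 1)) : ℕ) = (k : ℕ) := Fin.coe_castSucc k
  rw [← h, faCC_fin]

lemma faCC_tel (n r : ℕ) (c : Fin (r + 1) → Fin n) (hc : ∀ i j, i ≤ j → c i ≤ c j) (j : ℕ) :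
    ∑ m ∈ Finset.range j, (faCC n r c (m + 1) - faCC n r c m) = faCC n r c j - faCC n r c 0 :=
  Finset.sum_range_tsub (faCC_mono n r c hc) j

theorem fa_of_Tpow (F : Type*) [Field F] (r n : ℕ) (hr : 1 ≤ r) (hn : 1 ≤ n) :
    fa F r n (fun _ => (0 : F)) =
      ∑ d ∈ Finset.univ.filter (fun d : Fin r → Fin n =>
          ∑ i, (d i : ℕ) = (r - 1) * (n - 1)),
        ∏ i, MvPolynomial.X i ^ (d i : ℕ) := by
  classical
  unfold fa
  refine Finset.sum_nbij'
    (fun c => fun k : Fin r =>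
      (⟨n - 1 - ((c k.succ : ℕ) - (c k.castSucc : ℕ)), by omega⟩ : Fin n))
    (fun d => fun j : Fin (r + 1) =>
      (⟨min (faSS n r d (j : ℕ)) (n - 1), by omega⟩ : Fin n))
    ?_ ?_ ?_ ?_ ?_
  · -- forward membership
    intro c hc
    rw [Finset.mem_filter] at hc ⊢
    obtain ⟨-, hmono, h0, hlast⟩ := hc
    refine ⟨Finset.mem_univ _, ?_⟩
    have hdiff : ∀ k ∈ (Finset.univ : Finset (Fin r)),
        (c k.succ : ℕ) - (c k.castSucc : ℕ) ≤ n - 1 := fun k _ => by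
      have := (c k.succ).isLt; omega
    show ∑ k : Fin r, (n - 1 - ((c k.succ : ℕ) - (c k.castSucc : ℕ))) = (r - 1) * (n - 1)
    rw [Finset.sum_tsub_distrib _ hdiff, Finset.sum_const, Finset.card_univ, Fintype.card_fin,
      smul_eq_mul]
    have e1 : ∑ k : Fin r, ((c k.succ : ℕ) - (c k.castSucc : ℕ))
        = ∑ m ∈ Finset.range r, (faCC n r c (m + 1) - faCC n r c m) := by
      rw [← Fin.sum_univ_eq_sum_range (fun m => faCC n r c (m + 1) - faCC n r c m) r]
      exact Finset.sum_congr rfl fun k _ => by rw [faCC_succ, faCC_castSucc]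
    have e2 := faCC_fin n r c (Fin.last r)
    rw [Fin.val_last] at e2
    have e3 := faCC_fin n r c 0
    rw [Fin.val_zero] at e3
    rw [e1, faCC_tel n r c hmono r, e2, e3, h0, hlast, Nat.sub_one_mul]
    omega
  · -- backward membership
    intro d hd
    rw [Finset.mem_filter] at hd ⊢
    obtain ⟨-, hd⟩ := hd
    have hS : ∀ j ≤ r, faSS n r d j ≤ n - 1 := fun j hj =>
      (faSS_mono n r d hj).trans (le_of_eq (faSS_last n r hr hn d hd))
    refine ⟨Finset.mem_univ _, fun i j hij => ?_, ?_, ?_⟩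
    · rw [Fin.mk_le_mk]
      exact min_le_min (faSS_mono n r d hij) le_rfl
    · show min (faSS n r d ((0 : Fin (r + 1)) : ℕ)) (n - 1) = 0
      simp [faSS]
    · show min (faSS n r d ((Fin.last r : Fin (r + 1)) : ℕ)) (n - 1) = n - 1
      rw [Fin.val_last, faSS_last n r hr hn d hd, min_self]
  · -- left inverse
    intro c hc
    rw [Finset.mem_filter] at hc
    obtain ⟨-, hmono, h0, hlast⟩ := hc
    funext j
    apply Fin.ext
    have e1 : ∀ m ∈ Finset.range (j : ℕ),
        (n - 1 - if h : m < r then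
          ((⟨n - 1 - ((c (⟨m, h⟩ : Fin r).succ : ℕ) - (c (⟨m, h⟩ : Fin r).castSucc : ℕ)),
            by omega⟩ : Fin n) : ℕ) else 0)
        = faCC n r c (m + 1) - faCC n r c m := by
      intro m hm
      rw [Finset.mem_range] at hm
      have hmr : m < r := lt_of_lt_of_le hm (by have := j.isLt; omega)
      rw [dif_pos hmr]
      have h1 := faCC_succ n r c ⟨m, hmr⟩
      have h2 := faCC_castSucc n r c ⟨m, hmr⟩
      have hlt := (c (⟨m, hmr⟩ : Fin r).succ).isLt
      have hle : (c (⟨m, hmr⟩ : Fin r).castSucc : ℕ) ≤ (c (⟨m, hmr⟩ : Fin r).succ : ℕ) :=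
        hmono _ _ (Fin.castSucc_le_succ _)
      simp only [Fin.val_mk] at h1 h2 ⊢
      omega
    have hSS : faSS n r (fun k : Fin r =>
        (⟨n - 1 - ((c k.succ : ℕ) - (c k.castSucc : ℕ)), by omega⟩ : Fin n)) (j : ℕ)
        = (c j : ℕ) := by
      rw [faSS, Finset.sum_congr rfl e1, faCC_tel n r c hmono]
      have e3 := faCC_fin n r c 0
      rw [Fin.val_zero] at e3
      rw [faCC_fin n r c j, e3, h0, Nat.sub_zero]
    show min (faSS n r _ (j : ℕ)) (n - 1) = (c j : ℕ)
    rw [hSS]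
    have := (c j).isLt
    omega
  · -- right inverse
    intro d hd
    rw [Finset.mem_filter] at hd
    obtain ⟨-, hd⟩ := hd
    have hS : ∀ j ≤ r, faSS n r d j ≤ n - 1 := fun j hj =>
      (faSS_mono n r d hj).trans (le_of_eq (faSS_last n r hr hn d hd))
    funext k
    apply Fin.ext
    have h1 := faSS_succ n r d k
    have h2 : faSS n r d ((k : ℕ) + 1) ≤ n - 1 := hS _ (by have := k.isLt; omega)
    have h3 : faSS n r d (k : ℕ) ≤ n - 1 := hS _ (by have := k.isLt; omega)
    have h4 : (d k : ℕ) ≤ n - 1 := by have := (d k).isLt; omega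
    show n - 1 - (min (faSS n r d ((k.succ : Fin (r + 1)) : ℕ)) (n - 1)
        - min (faSS n r d ((k.castSucc : Fin (r + 1)) : ℕ)) (n - 1)) = (d k : ℕ)
    rw [Fin.val_succ, Fin.coe_castSucc]
    omega
  · -- term equality
    intro c hc
    rw [Finset.mem_filter] at hc
    obtain ⟨-, hmono, h0, hlast⟩ := hc
    simp only [map_zero, sub_zero]
    refine Finset.prod_congr rfl fun k _ => ?_
    rw [Finset.prod_const]
    congr 1
    have hicc : Finset.univ.filter (fun i : Fin n =>
        ¬(c (Fin.castSucc k) ≤ i ∧ i ≤ c (Fin.succ k)))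
        = Finset.univ \ Finset.Icc (c (Fin.castSucc k)) (c (Fin.succ k)) := by
      ext i
      simp [Finset.mem_Icc]
    rw [hicc, Finset.card_sdiff_of_subset (Finset.subset_univ _), Finset.card_univ, Fintype.card_fin,
      Fin.card_Icc]
    have hab : (c k.castSucc : ℕ) ≤ (c k.succ : ℕ) := hmono _ _ (Fin.castSucc_le_succ _)
    have := (c k.succ).isLt
    show n - ((c k.succ : ℕ) + 1 - (c k.castSucc : ℕ))
        = n - 1 - ((c k.succ : ℕ) - (c k.castSucc : ℕ))
    omega
end

section
/- Let a be a monic polynomial of degree n ≥ 1 with roots α_1,…,α_n over an algebraically closed field, r ≥ 1, and let I be the ideal of F[T_1,…,T_r] generated by a(T_1),…,a(T_r). Define f_{a/(T-α_1)} using the roots α_2,…,α_n. Then for every l ∈ {1,…,r}: (T_l - α_1)·f_a(T_1,…,T_r) ≡ (∏_{j=1}^r (T_j - α_1))·f_{a/(T-α_1)}(T_1,…,T_r) (mod I). -/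
open Finset MvPolynomial

namespace FaAux

variable {F : Type*} [CommRing F]

noncomputable def Xv (F : Type*) [CommRing F] (r : ℕ) (j : ℕ) : MvPolynomial (Fin r) F :=
  if h : j < r then X ⟨j, h⟩ else 0
noncomputable def Lp (r : ℕ) (β : ℕ → F) (j k : ℕ) : MvPolynomial (Fin r) F :=
  ∏ i ∈ Finset.range k, (Xv F r j - C (β i))
noncomputable def Rp (r n : ℕ) (β : ℕ → F) (j k : ℕ) : MvPolynomial (Fin r) F :=
  ∏ i ∈ Finset.Ico k n, (Xv F r j - C (β i))
noncomputable def Ap (r n : ℕ) (β : ℕ → F) (j : ℕ) : MvPolynomial (Fin r) F :=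
  ∏ i ∈ Finset.range n, (Xv F r j - C (β i))
noncomputable def uu (r n : ℕ) (β : ℕ → F) (s : ℕ) : ℕ → ℕ → MvPolynomial (Fin r) F
  | 0, k => if k = s then 1 else 0
  | (j+1), k => (∑ c ∈ Finset.range (k+1), uu r n β s j c * Lp r β j c) * Rp r n β j (k+1)

lemma uu_zero (r n : ℕ) (β : ℕ → F) (s k : ℕ) :
    uu r n β s 0 k = if k = s then 1 else 0 := rfl
lemma uu_succ (r n : ℕ) (β : ℕ → F) (s j k : ℕ) :
    uu r n β s (j+1) k
      = (∑ c ∈ Finset.range (k+1), uu r n β s j c * Lp r β j c) * Rp r n β j (k+1) := rfl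
lemma Lp_succ (r : ℕ) (β : ℕ → F) (j k : ℕ) :
    Lp r β j (k+1) = Lp r β j k * (Xv F r j - C (β k)) :=
  Finset.prod_range_succ _ _
lemma Rp_succ (r n : ℕ) (β : ℕ → F) (j k : ℕ) (hk : k < n) :
    (Xv F r j - C (β k)) * Rp r n β j (k+1) = Rp r n β j k :=
  (Finset.prod_eq_prod_Ico_succ_bot hk (fun i => Xv F r j - C (β i))).symm
lemma Lp_mul_Rp (r n : ℕ) (β : ℕ → F) (j k : ℕ) (hk : k ≤ n) :
    Lp r β j k * Rp r n β j k = Ap r n β j :=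
  Finset.prod_range_mul_prod_Ico _ hk
lemma Rp_zero_eq (r n : ℕ) (β : ℕ → F) (j : ℕ) :
    Rp r n β j 0 = Ap r n β j := by
  unfold Rp Ap
  rw [Finset.range_eq_Ico]
lemma Lp_zero (r : ℕ) (β : ℕ → F) (j : ℕ) : Lp r β j 0 = 1 := rfl
lemma Lp_one (r : ℕ) (β : ℕ → F) (j : ℕ) : Lp r β j 1 = Xv F r j - C (β 0) := by
  simp [Lp]

lemma tele (r n : ℕ) (β : ℕ → F) (J : Ideal (MvPolynomial (Fin r) F))
    (hA : ∀ j, j < r → Ap r n β j ∈ J) (m k : ℕ) (hm : m + 1 < r) (hk : k < n) :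
    (∑ c ∈ Finset.range (k+1),
        uu r n β 0 (m+1) c * Lp r β (m+1) c * (Xv F r (m+1) - Xv F r m))
      * Rp r n β (m+1) (k+1) ∈ J := by
  set Sm : ℕ → MvPolynomial (Fin r) F :=
    fun c => ∑ d ∈ Finset.range (c+1), uu r n β 0 m d * Lp r β m d with hSm
  set Φ : ℕ → MvPolynomial (Fin r) F :=
    fun c => Sm c * Rp r n β m c * Lp r β (m+1) c with hΦ
  have hu : ∀ c, uu r n β 0 (m+1) c = Sm c * Rp r n β m (c+1) := fun c => rfl
  have hterm : ∀ c, c < n →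
      uu r n β 0 (m+1) c * Lp r β (m+1) c * (Xv F r (m+1) - Xv F r m)
        = (Φ (c+1) - Φ c) - uu r n β 0 m (c+1) * Ap r n β m * Lp r β (m+1) (c+1) := by
    intro c hc
    have e1 : Rp r n β m c = (Xv F r m - C (β c)) * Rp r n β m (c+1) :=
      (Rp_succ r n β m c hc).symm
    have e2 : Lp r β (m+1) (c+1) = Lp r β (m+1) c * (Xv F r (m+1) - C (β c)) :=
      Lp_succ r β (m+1) c
    have e3 : Ap r n β m = Lp r β m (c+1) * Rp r n β m (c+1) :=
      (Lp_mul_Rp r n β m (c+1) (by omega)).symm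
    have e4 : Sm (c+1) = Sm c + uu r n β 0 m (c+1) * Lp r β m (c+1) :=
      Finset.sum_range_succ _ _
    simp only [hΦ, hu, e4, e2, e3]
    rw [e1]
    ring
  have hsum : (∑ c ∈ Finset.range (k+1),
        uu r n β 0 (m+1) c * Lp r β (m+1) c * (Xv F r (m+1) - Xv F r m))
      = (Φ (k+1) - Φ 0)
        - ∑ c ∈ Finset.range (k+1), uu r n β 0 m (c+1) * Ap r n β m * Lp r β (m+1) (c+1) := by
    rw [← Finset.sum_range_sub Φ (k+1), ← Finset.sum_sub_distrib]
    refine Finset.sum_congr rfl fun c hc => ?_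
    exact hterm c (by have := Finset.mem_range.mp hc; omega)
  rw [hsum, sub_mul, sub_mul]
  refine Ideal.sub_mem _ (Ideal.sub_mem _ ?_ ?_) ?_
  · have : Φ (k+1) * Rp r n β (m+1) (k+1)
        = Sm (k+1) * Rp r n β m (k+1) * Ap r n β (m+1) := by
      simp only [hΦ]
      rw [mul_assoc, Lp_mul_Rp r n β (m+1) (k+1) (by omega)]
    rw [this]
    exact Ideal.mul_mem_left _ _ (hA (m+1) hm)
  · have : Φ 0 * Rp r n β (m+1) (k+1)
        = Sm 0 * Lp r β (m+1) 0 * Rp r n β (m+1) (k+1) * Ap r n β m := by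
      simp only [hΦ, Rp_zero_eq]
      ring
    rw [this]
    exact Ideal.mul_mem_left _ _ (hA m (by omega))
  · rw [Finset.sum_mul]
    refine Ideal.sum_mem _ fun c _ => ?_
    have : uu r n β 0 m (c+1) * Ap r n β m * Lp r β (m+1) (c+1) * Rp r n β (m+1) (k+1)
        = uu r n β 0 m (c+1) * Lp r β (m+1) (c+1) * Rp r n β (m+1) (k+1) * Ap r n β m := by
      ring
    rw [this]
    exact Ideal.mul_mem_left _ _ (hA m (by omega))

lemma base_sum (r n : ℕ) (β : ℕ → F) (s j k : ℕ) :
    (∑ c ∈ Finset.range (k+1), uu r n β s 0 c * Lp r β j c)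
      = if s < k+1 then Lp r β j s else 0 := by
  simp only [uu_zero, ite_mul, one_mul, zero_mul]
  rw [Finset.sum_ite_eq' (Finset.range (k+1)) s (fun c => Lp r β j c)]
  simp [Finset.mem_range]

lemma key (r n : ℕ) (β : ℕ → F) (J : Ideal (MvPolynomial (Fin r) F))
    (hA : ∀ j, j < r → Ap r n β j ∈ J) :
    ∀ j, j ≤ r → ∀ l, l < j → ∀ k, k < n →
      (Xv F r l - C (β 0)) * uu r n β 0 j k - uu r n β 1 j k ∈ J := by
  intro j
  induction j with
  | zero => intro _ l hl; omega
  | succ j ih =>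
    intro hj l hl k hk
    have easy : ∀ l', l' < j →
        (Xv F r l' - C (β 0)) * uu r n β 0 (j+1) k - uu r n β 1 (j+1) k ∈ J := by
      intro l' hl'
      have hrw : (Xv F r l' - C (β 0)) * uu r n β 0 (j+1) k - uu r n β 1 (j+1) k
          = (∑ c ∈ Finset.range (k+1),
              ((Xv F r l' - C (β 0)) * uu r n β 0 j c - uu r n β 1 j c) * Lp r β j c)
            * Rp r n β j (k+1) := by
        rw [uu_succ, uu_succ]
        rw [show (∑ c ∈ Finset.range (k+1),
              ((Xv F r l' - C (β 0)) * uu r n β 0 j c - uu r n β 1 j c) * Lp r β j c)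
            = (Xv F r l' - C (β 0)) * (∑ c ∈ Finset.range (k+1), uu r n β 0 j c * Lp r β j c)
              - ∑ c ∈ Finset.range (k+1), uu r n β 1 j c * Lp r β j c by
          rw [Finset.mul_sum, ← Finset.sum_sub_distrib]
          exact Finset.sum_congr rfl fun c _ => by ring]
        ring
      rw [hrw]
      refine Ideal.mul_mem_right _ _ (Ideal.sum_mem _ fun c hc => ?_)
      refine Ideal.mul_mem_right _ _ ?_
      exact ih (by omega) l' hl' c (by have := Finset.mem_range.mp hc; omega)
    rcases Nat.eq_zero_or_pos j with rfl | hjpos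
    · obtain rfl : l = 0 := by omega
      rw [uu_succ, uu_succ, base_sum, base_sum]
      rcases Nat.eq_zero_or_pos k with hk0 | hk0
      · subst hk0
        simp only [Nat.lt_irrefl, if_neg, Nat.zero_lt_succ, if_pos, Lp_zero]
        norm_num
        rw [Rp_succ r n β 0 0 hk, Rp_zero_eq]
        exact hA 0 (by omega)
      · rw [if_pos (by omega), if_pos (by omega), Lp_zero, Lp_one]
        simp only [one_mul]
        rw [sub_self]
        exact Ideal.zero_mem J
    · obtain ⟨m, rfl⟩ : ∃ m, j = m + 1 := ⟨j - 1, by omega⟩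
      rcases Nat.lt_succ_iff_lt_or_eq.mp hl with h | h
      · exact easy l h
      obtain rfl : l = m + 1 := h
      have hsplit : (Xv F r (m+1) - C (β 0)) * uu r n β 0 (m+1+1) k - uu r n β 1 (m+1+1) k
          = ((Xv F r m - C (β 0)) * uu r n β 0 (m+1+1) k - uu r n β 1 (m+1+1) k)
            + (∑ c ∈ Finset.range (k+1),
                uu r n β 0 (m+1) c * Lp r β (m+1) c * (Xv F r (m+1) - Xv F r m))
              * Rp r n β (m+1) (k+1) := by
        rw [show (∑ c ∈ Finset.range (k+1),
              uu r n β 0 (m+1) c * Lp r β (m+1) c * (Xv F r (m+1) - Xv F r m))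
            = (∑ c ∈ Finset.range (k+1), uu r n β 0 (m+1) c * Lp r β (m+1) c)
              * (Xv F r (m+1) - Xv F r m) from (Finset.sum_mul _ _ _).symm]
        rw [uu_succ r n β 0 (m+1) k]
        ring
      rw [hsplit]
      exact Ideal.add_mem _ (easy m (by omega)) (tele r n β J hA m k (by omega) hk)

-- shift lemmas
lemma uu_one_zero (r n : ℕ) (β : ℕ → F) : ∀ j, uu r n β 1 j 0 = 0 := by
  intro j
  induction j with
  | zero => simp [uu_zero]
  | succ j ih => rw [uu_succ]; simp [Finset.sum_range_one, ih]

lemma Lp_shift (r : ℕ) (β : ℕ → F) (j c : ℕ) :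
    Lp r β j (c+1) = (Xv F r j - C (β 0)) * Lp r (fun i => β (i+1)) j c := by
  unfold Lp
  rw [Finset.prod_range_succ' (fun i => Xv F r j - C (β i)) c, mul_comm]

lemma Rp_shift (r n : ℕ) (β : ℕ → F) (j k : ℕ) :
    Rp r n β j (k+2) = Rp r (n-1) (fun i => β (i+1)) j (k+1) := by
  unfold Rp
  rw [Finset.prod_Ico_eq_prod_range, Finset.prod_Ico_eq_prod_range]
  have h : n - (k+2) = n - 1 - (k+1) := by omega
  rw [h]
  exact Finset.prod_congr rfl fun i _ => by
    have h2 : k + 2 + i = k + 1 + i + 1 := by omega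
    rw [h2]

lemma uu_one_shift (r n : ℕ) (β : ℕ → F) :
    ∀ j k, uu r n β 1 j (k+1)
      = (∏ m ∈ Finset.range j, (Xv F r m - C (β 0)))
        * uu r (n-1) (fun i => β (i+1)) 0 j k := by
  intro j
  induction j with
  | zero =>
    intro k
    cases k <;> simp [uu_zero]
  | succ j ih =>
    intro k
    rw [uu_succ, Finset.sum_range_succ']
    simp only [ih, Lp_shift, uu_one_zero, zero_mul, add_zero]
    rw [Rp_shift]
    rw [uu_succ r (n-1) (fun i => β (i+1)) 0 j k, Finset.prod_range_succ]
    rw [show (∑ c ∈ Finset.range (k+1),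
          (∏ m ∈ Finset.range j, (Xv F r m - C (β 0)))
            * uu r (n-1) (fun i => β (i+1)) 0 j c
            * ((Xv F r j - C (β 0)) * Lp r (fun i => β (i+1)) j c))
        = ((∏ m ∈ Finset.range j, (Xv F r m - C (β 0))) * (Xv F r j - C (β 0)))
          * ∑ c ∈ Finset.range (k+1),
              uu r (n-1) (fun i => β (i+1)) 0 j c * Lp r (fun i => β (i+1)) j c by
      rw [Finset.mul_sum]
      exact Finset.sum_congr rfl fun c _ => by ring]
    ring

noncomputable def ga (r : ℕ) {n : ℕ} (α : Fin n → F) (j k : ℕ) : MvPolynomial (Fin r) F :=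
  ∑ c ∈ Finset.univ.filter (fun c : Fin (j + 1) → Fin n =>
      (∀ i i', i ≤ i' → c i ≤ c i') ∧ (c 0 : ℕ) = 0 ∧ (c (Fin.last j) : ℕ) = k),
    ∏ m : Fin j,
      ∏ i ∈ Finset.univ.filter (fun i : Fin n =>
          ¬(c (Fin.castSucc m) ≤ i ∧ i ≤ c (Fin.succ m))),
        (Xv F r (m : ℕ) - C (α i))

lemma interval_prod (r n : ℕ) (α : Fin n → F) (β : ℕ → F)
    (hβ : ∀ i : Fin n, β (i : ℕ) = α i) (j : ℕ) (a b : Fin n) (hab : a ≤ b) :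
    ∏ i ∈ Finset.univ.filter (fun i : Fin n => ¬(a ≤ i ∧ i ≤ b)),
        (Xv F r j - C (α i))
      = Lp r β j (a : ℕ) * Rp r n β j ((b : ℕ) + 1) := by
  classical
  rw [Finset.prod_filter]
  have step1 : ∀ i : Fin n,
      (if ¬(a ≤ i ∧ i ≤ b) then (Xv F r j - C (α i)) else 1)
        = (fun x : ℕ => if ¬((a : ℕ) ≤ x ∧ x ≤ (b : ℕ)) then (Xv F r j - C (β x)) else 1)
            (i : ℕ) := by
    intro i
    simp only [Fin.le_def, hβ]
  rw [Finset.prod_congr rfl fun i _ => step1 i]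
  rw [Fin.prod_univ_eq_prod_range
    (fun x : ℕ => if ¬((a : ℕ) ≤ x ∧ x ≤ (b : ℕ)) then (Xv F r j - C (β x)) else 1) n]
  rw [← Finset.prod_filter]
  have hset : (Finset.range n).filter (fun x => ¬((a : ℕ) ≤ x ∧ x ≤ (b : ℕ)))
      = Finset.range (a : ℕ) ∪ Finset.Ico ((b : ℕ) + 1) n := by
    ext x
    simp only [Finset.mem_filter, Finset.mem_range, Finset.mem_union, Finset.mem_Ico]
    omega
  rw [hset, Finset.prod_union]
  · rfl
  · rw [Finset.disjoint_left]
    intro x hx hx'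
    simp only [Finset.mem_range] at hx
    simp only [Finset.mem_Ico] at hx'
    have := hab
    rw [Fin.le_def] at this
    omega

lemma ga_zero (r n : ℕ) (α : Fin n → F) (hn : 0 < n) (k : ℕ) :
    ga r α 0 k = if k = 0 then 1 else 0 := by
  classical
  unfold ga
  rcases eq_or_ne k 0 with rfl | hk
  · rw [if_pos rfl]
    have hfil : (Finset.univ.filter (fun c : Fin 1 → Fin n =>
        (∀ i i', i ≤ i' → c i ≤ c i') ∧ (c 0 : ℕ) = 0 ∧ (c (Fin.last 0) : ℕ) = 0))
        = {fun _ => (⟨0, hn⟩ : Fin n)} := by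
      ext c
      simp only [Finset.mem_filter, Finset.mem_univ, true_and, Finset.mem_singleton]
      constructor
      · rintro ⟨-, h0, -⟩
        funext i
        have hi : i = 0 := Fin.eq_zero i
        subst hi
        exact Fin.ext h0
      · rintro rfl
        exact ⟨fun i i' _ => le_refl _, rfl, rfl⟩
    rw [hfil, Finset.sum_singleton]
    simp
  · rw [if_neg hk]
    have hfil : (Finset.univ.filter (fun c : Fin 1 → Fin n =>
        (∀ i i', i ≤ i' → c i ≤ c i') ∧ (c 0 : ℕ) = 0 ∧ (c (Fin.last 0) : ℕ) = k))
        = ∅ := by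
      ext c
      simp only [Finset.mem_filter, Finset.mem_univ, true_and, Finset.notMem_empty,
        iff_false, not_and]
      intro _ h0
      have : Fin.last 0 = (0 : Fin 1) := Fin.eq_zero _
      rw [this, h0]
      omega
    rw [hfil, Finset.sum_empty]

lemma snoc_mono {n j : ℕ} (c' : Fin (j+1) → Fin n) (x : Fin n)
    (hm : ∀ i i' : Fin (j+1), i ≤ i' → c' i ≤ c' i') (hlast : c' (Fin.last j) ≤ x) :
    ∀ i i' : Fin (j+1+1), i ≤ i' →
      @Fin.snoc (j+1) (fun _ => Fin n) c' x i ≤ @Fin.snoc (j+1) (fun _ => Fin n) c' x i' := by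
  intro i i' hii
  rcases Fin.eq_castSucc_or_eq_last i' with ⟨i1, rfl⟩ | rfl
  · rcases Fin.eq_castSucc_or_eq_last i with ⟨i0, rfl⟩ | rfl
    · rw [Fin.snoc_castSucc, Fin.snoc_castSucc]
      exact hm i0 i1 (Fin.castSucc_le_castSucc_iff.mp hii)
    · exact absurd hii (not_le.mpr (Fin.castSucc_lt_last i1))
  · rw [Fin.snoc_last]
    rcases Fin.eq_castSucc_or_eq_last i with ⟨i0, rfl⟩ | rfl
    · rw [Fin.snoc_castSucc]
      exact le_trans (hm i0 (Fin.last j) (Fin.le_last i0)) hlast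
    · rw [Fin.snoc_last]

lemma ga_succ (r n : ℕ) (α : Fin n → F) (β : ℕ → F)
    (hβ : ∀ i : Fin n, β (i : ℕ) = α i) (j k : ℕ) (hk : k < n) :
    ga r α (j+1) k
      = ∑ m ∈ Finset.range (k+1), ga r α j m * (Lp r β j m * Rp r n β j (k+1)) := by
  classical
  have step1 : ga r α (j+1) k
      = ∑ c' ∈ (Finset.univ.filter (fun c' : Fin (j+1) → Fin n =>
            (∀ i i', i ≤ i' → c' i ≤ c' i') ∧ (c' 0 : ℕ) = 0)).filter
            (fun c' => (c' (Fin.last j) : ℕ) ∈ Finset.range (k+1)),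
          (∏ m : Fin j,
            ∏ i ∈ Finset.univ.filter (fun i : Fin n =>
                ¬(c' (Fin.castSucc m) ≤ i ∧ i ≤ c' (Fin.succ m))),
              (Xv F r (m : ℕ) - C (α i)))
          * (Lp r β j (c' (Fin.last j) : ℕ) * Rp r n β j (k+1)) := by
    unfold ga
    refine Finset.sum_bij' (fun c _ => c ∘ Fin.castSucc) (fun c' _ => Fin.snoc c' ⟨k, hk⟩)
      ?_ ?_ ?_ ?_ ?_
    · intro c hc
      obtain ⟨-, hmono, h0, hlast⟩ := Finset.mem_filter.mp hc
      refine Finset.mem_filter.mpr ⟨Finset.mem_filter.mpr ⟨Finset.mem_univ _, ?_, ?_⟩, ?_⟩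
      · intro i i' h
        exact hmono _ _ (Fin.castSucc_le_castSucc_iff.mpr h)
      · show ((c (Fin.castSucc 0) : ℕ)) = 0
        rw [Fin.castSucc_zero]
        exact h0
      · have h1 : c (Fin.castSucc (Fin.last j)) ≤ c (Fin.last (j+1)) :=
          hmono _ _ (Fin.le_last _)
        rw [Fin.le_def, hlast] at h1
        simpa [Finset.mem_range, Nat.lt_succ_iff] using h1
    · intro c' hc'
      obtain ⟨hq, hmem⟩ := Finset.mem_filter.mp hc'
      obtain ⟨-, hmono, h0⟩ := Finset.mem_filter.mp hq
      rw [Finset.mem_range, Nat.lt_succ_iff] at hmem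
      refine Finset.mem_filter.mpr ⟨Finset.mem_univ _, ?_, ?_, ?_⟩
      · exact snoc_mono c' ⟨k, hk⟩ hmono (by rw [Fin.le_def]; exact hmem)
      · rw [← Fin.castSucc_zero, Fin.snoc_castSucc]
        exact h0
      · rw [Fin.snoc_last]
    · intro c hc
      obtain ⟨-, hmono, h0, hlast⟩ := Finset.mem_filter.mp hc
      funext i
      rcases Fin.eq_castSucc_or_eq_last i with ⟨i0, rfl⟩ | rfl
      · rw [Fin.snoc_castSucc]
        rfl
      · rw [Fin.snoc_last]
        exact (Fin.ext hlast).symm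
    · intro c' hc'
      funext i
      simp only [Function.comp_apply, Fin.snoc_castSucc]
    · intro c hc
      obtain ⟨-, hmono, h0, hlast⟩ := Finset.mem_filter.mp hc
      rw [Fin.prod_univ_castSucc]
      have hcl : c (Fin.succ (Fin.last j)) = ⟨k, hk⟩ := by
        rw [Fin.succ_last]
        exact Fin.ext hlast
      refine congr_arg₂ (· * ·) ?_ ?_
      · refine Finset.prod_congr rfl fun m _ => ?_
        simp only [Function.comp_apply, Fin.succ_castSucc, Fin.coe_castSucc]
      · have hab : c (Fin.castSucc (Fin.last j)) ≤ (⟨k, hk⟩ : Fin n) := by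
          rw [← hcl]
          exact hmono _ _ (le_of_lt Fin.castSucc_lt_succ)
        have hip := interval_prod r n α β hβ j (c (Fin.castSucc (Fin.last j))) ⟨k, hk⟩ hab
        rw [hcl, Fin.val_last]
        simp only [Function.comp_apply]
        exact hip
  rw [step1,
    ← Finset.sum_fiberwise_eq_sum_filter _ (Finset.range (k+1))
      (fun c' : Fin (j+1) → Fin n => (c' (Fin.last j) : ℕ))]
  refine Finset.sum_congr rfl fun m hm => ?_
  have hfil : (Finset.univ.filter (fun c' : Fin (j+1) → Fin n =>
        (∀ i i', i ≤ i' → c' i ≤ c' i') ∧ (c' 0 : ℕ) = 0)).filter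
        (fun c' => (c' (Fin.last j) : ℕ) = m)
      = Finset.univ.filter (fun c' : Fin (j+1) → Fin n =>
        (∀ i i', i ≤ i' → c' i ≤ c' i') ∧ (c' 0 : ℕ) = 0 ∧ (c' (Fin.last j) : ℕ) = m) := by
    rw [Finset.filter_filter]
    refine Finset.filter_congr fun c' _ => ?_
    tauto
  rw [hfil]
  unfold ga
  rw [Finset.sum_mul]
  refine Finset.sum_congr rfl fun c' hc' => ?_
  have hlast : (c' (Fin.last j) : ℕ) = m := (Finset.mem_filter.mp hc').2.2.2
  rw [hlast]

lemma ga_eq_uu (r n : ℕ) (α : Fin n → F) (β : ℕ → F) (hn : 0 < n)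
    (hβ : ∀ i : Fin n, β (i : ℕ) = α i) :
    ∀ j k, k < n → ga r α j k = uu r n β 0 j k := by
  intro j
  induction j with
  | zero =>
    intro k hk
    rw [ga_zero r n α hn k, uu_zero]
  | succ j ih =>
    intro k hk
    rw [ga_succ r n α β hβ j k hk, uu_succ, Finset.sum_mul]
    refine Finset.sum_congr rfl fun m hm => ?_
    rw [ih m (by have := Finset.mem_range.mp hm; omega)]
    ring



end FaAux

open FaAux Finset MvPolynomial in
theorem fa_congruence_quotient_root (F : Type*) [Field F] [IsAlgClosed F] (r n : ℕ)
    (hn : 1 ≤ n) (hr : 1 ≤ r) (α : Fin n → F) (l : Fin r) :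
    (MvPolynomial.X l - MvPolynomial.C (α ⟨0, by omega⟩)) * fa F r n α
      - (∏ j : Fin r, (MvPolynomial.X j - MvPolynomial.C (α ⟨0, by omega⟩)))
        * fa F r (n - 1) (fun i => α ⟨(i : ℕ) + 1, by have := i.isLt; omega⟩) ∈
      Ideal.span (Set.range fun j : Fin r =>
        ∏ i, (MvPolynomial.X j - MvPolynomial.C (α i))) := by
  classical
  set β : ℕ → F := fun i => if h : i < n then α ⟨i, h⟩ else 0 with hβdef
  have hβ : ∀ i : Fin n, β (i : ℕ) = α i := by
    intro i
    simp [hβdef, i.isLt]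
  have hβ0 : β 0 = α ⟨0, by omega⟩ := by
    simp only [hβdef]
    rw [dif_pos (by omega : 0 < n)]
  have hXv : ∀ m : Fin r, Xv F r (m : ℕ) = X m := by
    intro m
    simp [Xv, m.isLt]
  set J := Ideal.span (Set.range fun j : Fin r =>
      ∏ i, (MvPolynomial.X j - MvPolynomial.C (α i))) with hJ
  have hA : ∀ j, j < r → Ap r n β j ∈ J := by
    intro j hj
    apply Ideal.subset_span
    refine ⟨⟨j, hj⟩, ?_⟩
    have h1 : ∀ i : Fin n, X (⟨j, hj⟩ : Fin r) - C (α i) = Xv F r j - C (β (i : ℕ)) := by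
      intro i
      rw [hβ i]
      simp [Xv, hj]
    calc (∏ i : Fin n, (X (⟨j, hj⟩ : Fin r) - C (α i)))
        = ∏ i : Fin n, (fun x : ℕ => Xv F r j - C (β x)) (i : ℕ) :=
          Finset.prod_congr rfl fun i _ => h1 i
      _ = ∏ i ∈ Finset.range n, (Xv F r j - C (β i)) :=
          Fin.prod_univ_eq_prod_range (fun x : ℕ => Xv F r j - C (β x)) n
      _ = Ap r n β j := rfl
  have hfa1 : fa F r n α = uu r n β 0 r (n-1) := by
    rw [← ga_eq_uu r n α β (by omega) hβ r (n-1) (by omega)]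
    unfold fa ga
    refine Finset.sum_congr rfl fun c hc => ?_
    exact Finset.prod_congr rfl fun m _ =>
      Finset.prod_congr rfl fun i _ => by rw [hXv m]
  have hfa2 : (∏ j : Fin r, (X j - C (α ⟨0, by omega⟩)))
      * fa F r (n - 1) (fun i => α ⟨(i : ℕ) + 1, by have := i.isLt; omega⟩)
      = uu r n β 1 r (n-1) := by
    have hprod : (∏ j : Fin r, (X j - C (α ⟨0, by omega⟩)))
        = ∏ m ∈ Finset.range r, (Xv F r m - C (β 0)) := by
      rw [← Fin.prod_univ_eq_prod_range (fun m : ℕ => Xv F r m - C (β 0)) r]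
      exact Finset.prod_congr rfl fun m _ => by rw [hXv m, hβ0]
    rcases Nat.lt_or_ge n 2 with h2 | h2
    · obtain rfl : n = 1 := by omega
      have hempty : fa F r (1 - 1) (fun i : Fin (1-1) =>
          α ⟨(i : ℕ) + 1, by have := i.isLt; omega⟩) = 0 := by
        unfold fa
        have he : IsEmpty (Fin (r+1) → Fin (1-1)) := ⟨fun f => (f 0).elim0⟩
        have : (Finset.univ : Finset (Fin (r+1) → Fin (1-1))) = ∅ :=
          Finset.univ_eq_empty
        rw [this]
        simp
      rw [hempty, mul_zero]
      rw [show (1 : ℕ) - 1 = 0 from rfl, uu_one_zero]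
    · set α' : Fin (n-1) → F := fun i => α ⟨(i : ℕ) + 1, by have := i.isLt; omega⟩ with hα'
      set β' : ℕ → F := fun i => β (i+1) with hβ'def
      have hβ' : ∀ i : Fin (n-1), β' (i : ℕ) = α' i := by
        intro i
        have hi : (i : ℕ) + 1 < n := by have := i.isLt; omega
        simp only [hβ'def, hβdef, hα']
        rw [dif_pos hi]
      have hsh := uu_one_shift r n β r (n-2)
      rw [show n - 2 + 1 = n - 1 by omega] at hsh
      have hga : fa F r (n-1) α' = uu r (n-1) β' 0 r (n-2) := by
        rw [← ga_eq_uu r (n-1) α' β' (by omega) hβ' r (n-2) (by omega)]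
        unfold fa ga
        refine Finset.sum_congr rfl fun c hc => ?_
        exact Finset.prod_congr rfl fun m _ =>
          Finset.prod_congr rfl fun i _ => by rw [hXv m]
      rw [hga, hsh, hprod]
  rw [hfa1, hfa2]
  have hkey := key r n β J hA r le_rfl (l : ℕ) l.isLt (n-1) (by omega)
  rw [hXv l, hβ0] at hkey
  exact hkey
end

section
/- Let a be a monic polynomial of degree n ≥ 1 with roots α_1,…,α_n over a field F and r ≥ 1. Then the polynomial f_a(T_1,…,T_r) is symmetric in the variables T_1,…,T_r: for every permutation σ of {1,…,r}, f_a(T_{σ(1)},…,T_{σ(r)}) = f_a(T_1,…,T_r). -/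
namespace FaAux

open Finset MvPolynomial

variable {F : Type*} [Field F] {r n : ℕ}

noncomputable def P (β : ℕ → F) (x : MvPolynomial (Fin r) F) (s t : ℕ) :
    MvPolynomial (Fin r) F :=
  ∏ i ∈ Finset.Ico s t, (x - MvPolynomial.C (β i))

lemma P_consec (β : ℕ → F) (x : MvPolynomial (Fin r) F) {s m t : ℕ}
    (h1 : s ≤ m) (h2 : m ≤ t) : P β x s m * P β x m t = P β x s t :=
  Finset.prod_Ico_consecutive _ h1 h2

lemma P_self (β : ℕ → F) (x : MvPolynomial (Fin r) F) (s : ℕ) : P β x s s = 1 := by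
  simp [P]

lemma telescope (β : ℕ → F) (x y : MvPolynomial (Fin r) F) {a b : ℕ} (hab : a ≤ b) :
    (x - y) * ∑ m ∈ Finset.Icc a b, P β x (m + 1) (b + 1) * P β y a m
      = P β x a (b + 1) - P β y a (b + 1) := by
  rw [Finset.mul_sum, ← Finset.Ico_add_one_right_eq_Icc, Finset.sum_Ico_eq_sum_range]
  have key : ∀ k ∈ Finset.range (b + 1 - a),
      (x - y) * (P β x (a + k + 1) (b + 1) * P β y a (a + k))
        = (fun k => P β x (a + k) (b + 1) * P β y a (a + k)) k
          - (fun k => P β x (a + k) (b + 1) * P β y a (a + k)) (k + 1) := by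
    intro k hk
    rw [Finset.mem_range] at hk
    have e1 : P β x (a + k) (b + 1) = (x - MvPolynomial.C (β (a + k))) * P β x (a + k + 1) (b + 1) :=
      Finset.prod_eq_prod_Ico_succ_bot (by omega) _
    have e2 : P β y a (a + k + 1) = P β y a (a + k) * (y - MvPolynomial.C (β (a + k))) :=
      Finset.prod_Ico_succ_top (by omega) _
    have e0 : a + (k + 1) = a + k + 1 := by omega
    simp only [e0, e1, e2]
    ring
  rw [Finset.sum_congr rfl key, Finset.sum_range_sub']
  have hN : a + (b + 1 - a) = b + 1 := by omega
  simp only [Nat.add_zero, hN, P_self]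
  ring

lemma Ssymm (β : ℕ → F) {x y : MvPolynomial (Fin r) F} (hxy : x ≠ y) (a b : ℕ) :
    ∑ m ∈ Finset.Icc a b, P β x (m + 1) (b + 1) * P β y a m
      = ∑ m ∈ Finset.Icc a b, P β y (m + 1) (b + 1) * P β x a m := by
  rcases le_or_gt a b with hab | hab
  · have hx : x - y ≠ 0 := sub_ne_zero.mpr hxy
    apply mul_left_cancel₀ hx
    rw [telescope β x y hab]
    have h1 := telescope β y x hab
    have h2 : (x - y) * ∑ m ∈ Finset.Icc a b, P β y (m + 1) (b + 1) * P β x a m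
        = -((y - x) * ∑ m ∈ Finset.Icc a b, P β y (m + 1) (b + 1) * P β x a m) := by ring
    rw [h2, h1]
    ring
  · rw [Finset.Icc_eq_empty (by omega)]
    simp

variable (α : Fin n → F)

noncomputable def bet (α : Fin n → F) : ℕ → F := fun i => if h : i < n then α ⟨i, h⟩ else 0

lemma prod_compl (x : MvPolynomial (Fin r) F) (a b : Fin n) (hab : a ≤ b) :
    ∏ i ∈ Finset.univ.filter (fun i : Fin n => ¬(a ≤ i ∧ i ≤ b)),
        (x - MvPolynomial.C (α i))
      = P (bet α) x 0 (a : ℕ) * P (bet α) x ((b : ℕ) + 1) n := by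
  set g : ℕ → MvPolynomial (Fin r) F :=
    fun i => if ¬((a : ℕ) ≤ i ∧ i ≤ (b : ℕ)) then x - MvPolynomial.C (bet α i) else 1 with hg
  have key : ∀ i : Fin n, (if ¬(a ≤ i ∧ i ≤ b) then x - MvPolynomial.C (α i) else 1) = g (i : ℕ) := by
    intro i
    have hb : bet α (i : ℕ) = α i := by simp [bet, i.isLt]
    simp only [hg, hb, Fin.le_def]
  have disj : Disjoint (Finset.Ico 0 (a : ℕ)) (Finset.Ico ((b : ℕ) + 1) n) := by
    rw [Finset.disjoint_left]
    intro i hi hi'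
    simp only [Finset.mem_Ico] at hi hi'
    omega
  calc ∏ i ∈ Finset.univ.filter (fun i : Fin n => ¬(a ≤ i ∧ i ≤ b)), (x - MvPolynomial.C (α i))
      = ∏ i : Fin n, g (i : ℕ) := by
        rw [Finset.prod_filter]; exact Finset.prod_congr rfl fun i _ => key i
    _ = ∏ i ∈ Finset.range n, g i := Fin.prod_univ_eq_prod_range g n
    _ = ∏ i ∈ (Finset.range n).filter (fun i => ¬((a : ℕ) ≤ i ∧ i ≤ (b : ℕ))),
          (x - MvPolynomial.C (bet α i)) := (Finset.prod_filter _ _).symm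
    _ = ∏ i ∈ Finset.Ico 0 (a : ℕ) ∪ Finset.Ico ((b : ℕ) + 1) n,
          (x - MvPolynomial.C (bet α i)) := by
        congr 1
        ext i
        have hb : (b : ℕ) < n := b.isLt
        simp only [Finset.mem_filter, Finset.mem_range, Finset.mem_Ico, Finset.mem_union]
        omega
    _ = P (bet α) x 0 (a : ℕ) * P (bet α) x ((b : ℕ) + 1) n := Finset.prod_union disj

end FaAux



namespace FaAux
open Finset MvPolynomial
variable {F : Type*} [Field F] {r n : ℕ} (α : Fin n → F)

variable (r n) in
noncomputable def Cset : Finset (Fin (r + 1) → Fin n) :=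
  Finset.univ.filter (fun c : Fin (r + 1) → Fin n =>
      (∀ i j, i ≤ j → c i ≤ c j) ∧ (c 0 : ℕ) = 0 ∧ (c (Fin.last r) : ℕ) = n - 1)

lemma mem_Cset {c : Fin (r + 1) → Fin n} : c ∈ Cset r n ↔
    (∀ i j, i ≤ j → c i ≤ c j) ∧ (c 0 : ℕ) = 0 ∧ (c (Fin.last r) : ℕ) = n - 1 := by
  simp [Cset]

lemma fa_eq : fa F r n α = ∑ c ∈ Cset r n, ∏ k : Fin r,
    (P (bet α) (MvPolynomial.X k) 0 ((c k.castSucc : ℕ))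
      * P (bet α) (MvPolynomial.X k) ((c k.succ : ℕ) + 1) n) := by
  rw [fa]
  refine Finset.sum_congr rfl fun c hc => Finset.prod_congr rfl fun k _ => ?_
  have hm := (mem_Cset.mp hc).1
  exact prod_compl α _ _ _ (hm _ _ (Fin.castSucc_le_succ k))

lemma rename_fa_eq (s : Equiv.Perm (Fin r)) :
    MvPolynomial.rename (⇑s) (fa F r n α) = ∑ c ∈ Cset r n, ∏ k : Fin r,
      (P (bet α) (MvPolynomial.X k) 0 ((c (s⁻¹ k).castSucc : ℕ))
        * P (bet α) (MvPolynomial.X k) ((c (s⁻¹ k).succ : ℕ) + 1) n) := by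
  rw [fa, map_sum]
  refine Finset.sum_congr rfl fun c hc => ?_
  have hm := (mem_Cset.mp hc).1
  rw [map_prod]
  set h : Fin r → MvPolynomial (Fin r) F := fun k' =>
    ∏ i ∈ Finset.univ.filter (fun i : Fin n =>
        ¬(c (Fin.castSucc (s⁻¹ k')) ≤ i ∧ i ≤ c (Fin.succ (s⁻¹ k')))),
      (MvPolynomial.X k' - MvPolynomial.C (α i)) with hh
  have step : ∀ k ∈ Finset.univ,
      (MvPolynomial.rename (⇑s)
        (∏ i ∈ Finset.univ.filter (fun i : Fin n =>
            ¬(c (Fin.castSucc k) ≤ i ∧ i ≤ c (Fin.succ k))),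
          (MvPolynomial.X k - MvPolynomial.C (α i))))
      = h (s k) := by
    intro k _
    rw [map_prod, hh]
    simp only [map_sub, MvPolynomial.rename_X, MvPolynomial.rename_C, Equiv.Perm.inv_def, Equiv.symm_apply_apply]
  rw [Finset.prod_congr rfl step, Equiv.prod_comp s h]
  exact Finset.prod_congr rfl fun k _ =>
    prod_compl α _ _ _ (hm _ _ (Fin.castSucc_le_succ (s⁻¹ k)))

lemma regroup {j : ℕ} (hj : j + 1 < r) (f : (Fin (r + 1) → Fin n) → MvPolynomial (Fin r) F) :
    ∑ c ∈ Cset r n, f c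
      = ∑ d ∈ (Cset r n).filter
            (fun d => d ⟨j + 1, by omega⟩ = d ⟨j, by omega⟩),
          ∑ m ∈ Finset.Icc (d ⟨j, by omega⟩) (d ⟨j + 2, by omega⟩),
            f (Function.update d ⟨j + 1, by omega⟩ m) := by
  classical
  set q : Fin (r + 1) := ⟨j, by omega⟩ with hq
  set p : Fin (r + 1) := ⟨j + 1, by omega⟩ with hp
  set w : Fin (r + 1) := ⟨j + 2, by omega⟩ with hw
  have hqp : q ≤ p := by simp [hq, hp, Fin.le_def]
  have hpw : p ≤ w := by simp [hp, hw, Fin.le_def]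
  have hqw : q ≤ w := le_trans hqp hpw
  have hqp' : q ≠ p := by simp [hq, hp, Fin.ext_iff]
  have hwp' : w ≠ p := by simp [hw, hp, Fin.ext_iff]
  have h0p : (0 : Fin (r + 1)) ≠ p := by
    refine Fin.ne_of_val_ne ?_
    have h3 : (p : ℕ) = j + 1 := rfl
    simp [h3]
  have hlp : (Fin.last r) ≠ p := by
    refine Fin.ne_of_val_ne ?_
    have h3 : (p : ℕ) = j + 1 := rfl
    simp only [Fin.val_last, h3]
    omega
  have upd_mem : ∀ d ∈ Cset r n, ∀ m : Fin n, d q ≤ m → m ≤ d w →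
      Function.update d p m ∈ Cset r n := by
    intro d hd m hm1 hm2
    rw [mem_Cset] at hd ⊢
    obtain ⟨hmono, h0, hl⟩ := hd
    refine ⟨?_, ?_, ?_⟩
    · intro i k hik
      rcases eq_or_ne i p with rfl | hi <;> rcases eq_or_ne k p with rfl | hk
      · simp
      · rw [Function.update_self, Function.update_of_ne hk]
        have hwk : w ≤ k := by
          have h1 : (p : ℕ) ≤ (k : ℕ) := hik
          have h2 : (k : ℕ) ≠ (p : ℕ) := fun h => hk (Fin.ext h)
          have h3 : (p : ℕ) = j + 1 := rfl
          have h4 : (w : ℕ) = j + 2 := rfl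
          rw [Fin.le_def, h4]
          omega
        exact le_trans hm2 (hmono w k hwk)
      · rw [Function.update_of_ne hi, Function.update_self]
        have hiq : i ≤ q := by
          have h1 : (i : ℕ) ≤ (p : ℕ) := hik
          have h2 : (i : ℕ) ≠ (p : ℕ) := fun h => hi (Fin.ext h)
          have h3 : (p : ℕ) = j + 1 := rfl
          have h4 : (q : ℕ) = j := rfl
          rw [Fin.le_def, h4]
          omega
        exact le_trans (hmono i q hiq) hm1
      · rw [Function.update_of_ne hi, Function.update_of_ne hk]
        exact hmono i k hik
    · rw [Function.update_of_ne h0p]; exact h0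
    · rw [Function.update_of_ne hlp]; exact hl
  have key : ∑ c ∈ Cset r n, f c
      = ∑ x ∈ ((Cset r n).filter (fun d => d p = d q)).sigma
          (fun d => Finset.Icc (d q) (d w)),
          f (Function.update x.1 p x.2) := by
    refine Finset.sum_nbij' (i := fun c => ⟨Function.update c p (c q), c p⟩)
      (j := fun x => Function.update x.1 p x.2) ?_ ?_ ?_ ?_ ?_
    · intro c hc
      have hmono := (mem_Cset.mp hc).1
      rw [Finset.mem_sigma]
      constructor
      · rw [Finset.mem_filter]
        refine ⟨upd_mem c hc (c q) le_rfl (hmono q w hqw), ?_⟩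
        show Function.update c p (c q) p = Function.update c p (c q) q
        rw [Function.update_self, Function.update_of_ne hqp']
      · show c p ∈ Finset.Icc (Function.update c p (c q) q) (Function.update c p (c q) w)
        rw [Finset.mem_Icc, Function.update_of_ne hqp', Function.update_of_ne hwp']
        exact ⟨hmono q p hqp, hmono p w hpw⟩
    · rintro ⟨d, m⟩ hx
      rw [Finset.mem_sigma, Finset.mem_filter, Finset.mem_Icc] at hx
      exact upd_mem d hx.1.1 m hx.2.1 hx.2.2
    · intro c hc
      simp
    · rintro ⟨d, m⟩ hx
      rw [Finset.mem_sigma, Finset.mem_filter, Finset.mem_Icc] at hx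
      have hd : d p = d q := hx.1.2
      simp [Function.update_of_ne hqp', hd]
    · intro c hc
      simp
  rw [key, Finset.sum_sigma]

end FaAux


namespace FaAux
open Finset MvPolynomial
variable {F : Type*} [Field F] {r n : ℕ} (α : Fin n → F)

lemma sum_val (a b : Fin n) (g : ℕ → MvPolynomial (Fin r) F) :
    ∑ m ∈ Finset.Icc a b, g (m : ℕ) = ∑ m ∈ Finset.Icc (a : ℕ) (b : ℕ), g m := by
  rw [← Fin.map_valEmbedding_Icc, Finset.sum_map]
  rfl

lemma sum_block (β : ℕ → F) {x y : MvPolynomial (Fin r) F} (hxy : x ≠ y)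
    (a b : Fin n) (E : MvPolynomial (Fin r) F) :
    ∑ m ∈ Finset.Icc a b,
        E * ((P β x 0 (m : ℕ) * P β x ((b : ℕ) + 1) n) * (P β y 0 (a : ℕ) * P β y ((m : ℕ) + 1) n))
      = ∑ m ∈ Finset.Icc a b,
        E * ((P β x 0 (a : ℕ) * P β x ((m : ℕ) + 1) n) * (P β y 0 (m : ℕ) * P β y ((b : ℕ) + 1) n)) := by
  have hbn : (b : ℕ) + 1 ≤ n := b.isLt
  set E' := E * (P β x 0 (a : ℕ) * P β x ((b : ℕ) + 1) n * (P β y 0 (a : ℕ) * P β y ((b : ℕ) + 1) n)) with hE'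
  have step1 : ∀ m ∈ Finset.Icc a b,
      E * ((P β x 0 (m : ℕ) * P β x ((b : ℕ) + 1) n) * (P β y 0 (a : ℕ) * P β y ((m : ℕ) + 1) n))
        = E' * (P β y ((m : ℕ) + 1) ((b : ℕ) + 1) * P β x (a : ℕ) (m : ℕ)) := by
    intro m hm
    rw [Finset.mem_Icc] at hm
    have hma : (a : ℕ) ≤ (m : ℕ) := hm.1
    have hmb : (m : ℕ) + 1 ≤ (b : ℕ) + 1 := by
      have : (m : ℕ) ≤ (b : ℕ) := hm.2
      omega
    rw [← P_consec β x (Nat.zero_le _) hma, ← P_consec β y hmb hbn, hE']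
    ring
  have step2 : ∀ m ∈ Finset.Icc a b,
      E * ((P β x 0 (a : ℕ) * P β x ((m : ℕ) + 1) n) * (P β y 0 (m : ℕ) * P β y ((b : ℕ) + 1) n))
        = E' * (P β x ((m : ℕ) + 1) ((b : ℕ) + 1) * P β y (a : ℕ) (m : ℕ)) := by
    intro m hm
    rw [Finset.mem_Icc] at hm
    have hma : (a : ℕ) ≤ (m : ℕ) := hm.1
    have hmb : (m : ℕ) + 1 ≤ (b : ℕ) + 1 := by
      have : (m : ℕ) ≤ (b : ℕ) := hm.2
      omega
    rw [← P_consec β y (Nat.zero_le _) hma, ← P_consec β x hmb hbn, hE']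
    ring
  rw [Finset.sum_congr rfl step1, Finset.sum_congr rfl step2, ← Finset.mul_sum, ← Finset.mul_sum]
  congr 1
  rw [sum_val a b (fun mm => P β y (mm + 1) ((b : ℕ) + 1) * P β x (a : ℕ) mm),
      sum_val a b (fun mm => P β x (mm + 1) ((b : ℕ) + 1) * P β y (a : ℕ) mm)]
  exact Ssymm β (fun h => hxy h.symm) (a : ℕ) (b : ℕ)

set_option maxHeartbeats 1600000 in
lemma swap_invar (j : ℕ) (hj : j + 1 < r) (hu : j < r) :
    MvPolynomial.rename (⇑(Equiv.swap (⟨j, hu⟩ : Fin r) ⟨j + 1, hj⟩)) (fa F r n α)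
      = fa F r n α := by
  classical
  set u : Fin r := ⟨j, hu⟩ with hudef
  set v : Fin r := ⟨j + 1, hj⟩ with hvdef
  have huv : u ≠ v := Fin.ne_of_val_ne (by simp [hudef, hvdef])
  have hXuv : (MvPolynomial.X u : MvPolynomial (Fin r) F) ≠ MvPolynomial.X v :=
    fun h => huv (MvPolynomial.X_injective h)
  have hvmem : v ∈ Finset.univ.erase u := Finset.mem_erase.mpr ⟨huv.symm, Finset.mem_univ v⟩
  have L := (rename_fa_eq α (Equiv.swap u v)).trans (regroup hj _)
  have R := (fa_eq α).trans (regroup hj _)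
  rw [L, R]
  refine Finset.sum_congr rfl fun d hd => ?_
  rw [Finset.mem_filter] at hd
  obtain ⟨hdC, hdpq⟩ := hd
  have hmono := (mem_Cset.mp hdC).1
  beta_reduce
  -- update helpers
  have upd_eq : ∀ (m : Fin n) (x : Fin (r + 1)), (x : ℕ) = j + 1 →
      Function.update d (⟨j + 1, by omega⟩ : Fin (r + 1)) m x = m := by
    intro m x hx
    have hx' : x = ⟨j + 1, by omega⟩ := Fin.ext hx
    rw [hx', Function.update_self]
  have upd_ne : ∀ (m : Fin n) (x : Fin (r + 1)), (x : ℕ) ≠ j + 1 →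
      Function.update d (⟨j + 1, by omega⟩ : Fin (r + 1)) m x = d x := by
    intro m x hx
    exact Function.update_of_ne (fun h => hx (by rw [h])) _ _
  have h₁ : ∀ m ∈ Finset.Icc (d ⟨j, by omega⟩) (d ⟨j + 2, by omega⟩),
      (∏ k : Fin r,
        (P (bet α) (MvPolynomial.X k) 0
            ((Function.update d (⟨j + 1, by omega⟩ : Fin (r + 1)) m
              (Fin.castSucc ((Equiv.swap u v)⁻¹ k)) : ℕ))
          * P (bet α) (MvPolynomial.X k)
            ((Function.update d (⟨j + 1, by omega⟩ : Fin (r + 1)) m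
              (Fin.succ ((Equiv.swap u v)⁻¹ k)) : ℕ) + 1) n))
      = (∏ k ∈ (Finset.univ.erase u).erase v,
            (P (bet α) (MvPolynomial.X k) 0 ((d k.castSucc : ℕ))
              * P (bet α) (MvPolynomial.X k) ((d k.succ : ℕ) + 1) n))
        * ((P (bet α) (MvPolynomial.X u) 0 (m : ℕ)
              * P (bet α) (MvPolynomial.X u) ((d ⟨j + 2, by omega⟩ : ℕ) + 1) n)
            * (P (bet α) (MvPolynomial.X v) 0 ((d ⟨j, by omega⟩ : ℕ))
              * P (bet α) (MvPolynomial.X v) ((m : ℕ) + 1) n)) := by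
    intro m hm
    rw [Equiv.swap_inv]
    rw [← Finset.mul_prod_erase Finset.univ _ (Finset.mem_univ u),
        ← Finset.mul_prod_erase _ _ hvmem]
    beta_reduce
    rw [Equiv.swap_apply_left, Equiv.swap_apply_right]
    rw [upd_eq m (Fin.castSucc v) rfl]
    rw [upd_ne m (Fin.succ v) (by omega : j + 1 + 1 ≠ j + 1)]
    rw [upd_ne m (Fin.castSucc u) (by omega : j ≠ j + 1)]
    rw [upd_eq m (Fin.succ u) rfl]
    rw [show Fin.succ v = (⟨j + 2, by omega⟩ : Fin (r + 1)) from Fin.ext rfl]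
    rw [show Fin.castSucc u = (⟨j, by omega⟩ : Fin (r + 1)) from Fin.ext rfl]
    have rest : ∀ k ∈ (Finset.univ.erase u).erase v,
        (P (bet α) (MvPolynomial.X k) 0
            ((Function.update d (⟨j + 1, by omega⟩ : Fin (r + 1)) m
              (Fin.castSucc (Equiv.swap u v k)) : ℕ))
          * P (bet α) (MvPolynomial.X k)
            ((Function.update d (⟨j + 1, by omega⟩ : Fin (r + 1)) m
              (Fin.succ (Equiv.swap u v k)) : ℕ) + 1) n)
        = (P (bet α) (MvPolynomial.X k) 0 ((d k.castSucc : ℕ))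
            * P (bet α) (MvPolynomial.X k) ((d k.succ : ℕ) + 1) n) := by
      intro k hk
      rw [Finset.mem_erase, Finset.mem_erase] at hk
      have hkv : k ≠ v := hk.1
      have hku : k ≠ u := hk.2.1
      rw [Equiv.swap_apply_of_ne_of_ne hku hkv]
      rw [upd_ne m (Fin.castSucc k) (fun h => hkv (Fin.ext h))]
      rw [upd_ne m (Fin.succ k) (fun h => hku (Fin.ext (Nat.add_right_cancel h)))]
    rw [Finset.prod_congr rfl rest]
    ring
  have h₂ : ∀ m ∈ Finset.Icc (d ⟨j, by omega⟩) (d ⟨j + 2, by omega⟩),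
      (∏ k : Fin r,
        (P (bet α) (MvPolynomial.X k) 0
            ((Function.update d (⟨j + 1, by omega⟩ : Fin (r + 1)) m
              (Fin.castSucc k) : ℕ))
          * P (bet α) (MvPolynomial.X k)
            ((Function.update d (⟨j + 1, by omega⟩ : Fin (r + 1)) m
              (Fin.succ k) : ℕ) + 1) n))
      = (∏ k ∈ (Finset.univ.erase u).erase v,
            (P (bet α) (MvPolynomial.X k) 0 ((d k.castSucc : ℕ))
              * P (bet α) (MvPolynomial.X k) ((d k.succ : ℕ) + 1) n))
        * ((P (bet α) (MvPolynomial.X u) 0 ((d ⟨j, by omega⟩ : ℕ))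
              * P (bet α) (MvPolynomial.X u) ((m : ℕ) + 1) n)
            * (P (bet α) (MvPolynomial.X v) 0 (m : ℕ)
              * P (bet α) (MvPolynomial.X v) ((d ⟨j + 2, by omega⟩ : ℕ) + 1) n)) := by
    intro m hm
    rw [← Finset.mul_prod_erase Finset.univ _ (Finset.mem_univ u),
        ← Finset.mul_prod_erase _ _ hvmem]
    beta_reduce
    rw [upd_ne m (Fin.castSucc u) (by omega : j ≠ j + 1)]
    rw [upd_eq m (Fin.succ u) rfl]
    rw [upd_eq m (Fin.castSucc v) rfl]
    rw [upd_ne m (Fin.succ v) (by omega : j + 1 + 1 ≠ j + 1)]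
    rw [show Fin.succ v = (⟨j + 2, by omega⟩ : Fin (r + 1)) from Fin.ext rfl]
    rw [show Fin.castSucc u = (⟨j, by omega⟩ : Fin (r + 1)) from Fin.ext rfl]
    have rest : ∀ k ∈ (Finset.univ.erase u).erase v,
        (P (bet α) (MvPolynomial.X k) 0
            ((Function.update d (⟨j + 1, by omega⟩ : Fin (r + 1)) m
              (Fin.castSucc k) : ℕ))
          * P (bet α) (MvPolynomial.X k)
            ((Function.update d (⟨j + 1, by omega⟩ : Fin (r + 1)) m
              (Fin.succ k) : ℕ) + 1) n)
        = (P (bet α) (MvPolynomial.X k) 0 ((d k.castSucc : ℕ))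
            * P (bet α) (MvPolynomial.X k) ((d k.succ : ℕ) + 1) n) := by
      intro k hk
      rw [Finset.mem_erase, Finset.mem_erase] at hk
      have hkv : k ≠ v := hk.1
      have hku : k ≠ u := hk.2.1
      rw [upd_ne m (Fin.castSucc k) (fun h => hkv (Fin.ext h))]
      rw [upd_ne m (Fin.succ k) (fun h => hku (Fin.ext (Nat.add_right_cancel h)))]
    rw [Finset.prod_congr rfl rest]
    ring
  rw [Finset.sum_congr rfl h₁, Finset.sum_congr rfl h₂]
  exact sum_block (bet α) hXuv _ _ _

end FaAux

theorem fa_symmetric (F : Type*) [Field F] (r n : ℕ) (hn : 1 ≤ n) (hr : 1 ≤ r)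
    (α : Fin n → F) (σ : Equiv.Perm (Fin r)) :
    MvPolynomial.rename σ (fa F r n α) = fa F r n α := by
  obtain ⟨r', rfl⟩ : ∃ r', r = r' + 1 := ⟨r - 1, by omega⟩
  have mem : σ ∈ Submonoid.closure
      (Set.range fun i : Fin r' => Equiv.swap i.castSucc i.succ) := by
    rw [Equiv.Perm.mclosure_swap_castSucc_succ]; trivial
  induction mem using Submonoid.closure_induction with
  | mem x hx =>
      obtain ⟨i, rfl⟩ := hx
      exact FaAux.swap_invar α i.val (by omega) (by omega)
  | one =>
      have h1 : ⇑(1 : Equiv.Perm (Fin (r' + 1))) = id := rfl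
      rw [h1, MvPolynomial.rename_id, AlgHom.id_apply]
  | mul x y hx hy ihx ihy =>
      have h1 : ⇑(x * y) = ⇑x ∘ ⇑y := rfl
      rw [h1, ← MvPolynomial.rename_rename, ihy, ihx]
end

section
/- Let a be a monic polynomial of degree n ≥ 1 with roots α_1,…,α_n over a field F and r ≥ 1. For σ a permutation of {1,…,n}, let f_a^σ be defined with roots listed in the order α_{σ(1)},…,α_{σ(n)}. Then f_a^σ = f_a; i.e., the polynomial f_a is independent of the ordering chosen for the roots of a. -/
open Finset MvPolynomial Equiv

namespace FaAux

lemma teleSum {R : Type*} [CommRing R] {ι : Type*} [LinearOrder ι]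
    (A : Finset ι) (T : ι → R) (x y : R) :
    (y - x) * ∑ m ∈ A, (∏ j ∈ A.filter (fun j => j < m), (T j - y)) *
        ∏ j ∈ A.filter (fun j => m < j), (T j - x)
      = ∏ j ∈ A, (T j - x) - ∏ j ∈ A, (T j - y) := by
  classical
  induction A using Finset.induction_on_max with
  | empty => simp
  | insert a s ha ih =>
    have ha' : a ∉ s := fun h => absurd (ha a h) (lt_irrefl a)
    have e1 : (insert a s).filter (fun j => j < a) = s := by
      rw [Finset.filter_insert, if_neg (lt_irrefl a)]
      exact Finset.filter_true_of_mem ha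
    have e2 : (insert a s).filter (fun j => a < j) = ∅ := by
      rw [Finset.filter_insert, if_neg (lt_irrefl a)]
      exact Finset.filter_false_of_mem (fun x hx => not_lt.2 (le_of_lt (ha x hx)))
    have key : ∑ m ∈ s, (∏ j ∈ (insert a s).filter (fun j => j < m), (T j - y)) *
        ∏ j ∈ (insert a s).filter (fun j => m < j), (T j - x)
        = (T a - x) * ∑ m ∈ s, (∏ j ∈ s.filter (fun j => j < m), (T j - y)) *
            ∏ j ∈ s.filter (fun j => m < j), (T j - x) := by
      rw [Finset.mul_sum]
      refine Finset.sum_congr rfl fun m hm => ?_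
      have h3 : (insert a s).filter (fun j => j < m) = s.filter (fun j => j < m) := by
        rw [Finset.filter_insert, if_neg (not_lt.2 (le_of_lt (ha m hm)))]
      have h4 : (insert a s).filter (fun j => m < j) = insert a (s.filter (fun j => m < j)) := by
        rw [Finset.filter_insert, if_pos (ha m hm)]
      rw [h3, h4, Finset.prod_insert (fun h => ha' (Finset.mem_of_mem_filter a h))]
      ring
    rw [Finset.sum_insert ha', e1, e2, key, Finset.prod_insert ha', Finset.prod_insert ha',
      Finset.prod_empty]
    linear_combination (T a - x) * ih

lemma keySum {R : Type*} [CommRing R] [IsDomain R] {ι : Type*} [LinearOrder ι]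
    (A : Finset ι) (T : ι → R) (x y : R) (hxy : x ≠ y) :
    ∑ m ∈ A, (∏ j ∈ A.filter (fun j => j < m), (T j - y)) *
        ∏ j ∈ A.filter (fun j => m < j), (T j - x)
      = ∑ m ∈ A, (∏ j ∈ A.filter (fun j => j < m), (T j - x)) *
        ∏ j ∈ A.filter (fun j => m < j), (T j - y) := by
  have h1 := teleSum A T x y
  have h2 := teleSum A T y x
  apply mul_left_cancel₀ (a := y - x) (sub_ne_zero.2 (Ne.symm hxy))
  rw [h1]
  linear_combination h2

def chainSet (r n : ℕ) : Finset (Fin (r + 1) → Fin n) :=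
  Finset.univ.filter (fun c : Fin (r + 1) → Fin n =>
      (∀ i j, i ≤ j → c i ≤ c j) ∧ (c 0 : ℕ) = 0 ∧ (c (Fin.last r) : ℕ) = n - 1)

noncomputable def pterm (F : Type*) [CommRing F] (r n : ℕ) (γ : Fin n → F)
    (c : Fin (r + 1) → Fin n) : MvPolynomial (Fin r) F :=
  ∏ j : Fin r,
      ∏ i ∈ Finset.univ.filter (fun i : Fin n =>
          ¬(c (Fin.castSucc j) ≤ i ∧ i ≤ c (Fin.succ j))),
        (MvPolynomial.X j - MvPolynomial.C (γ i))

set_option maxHeartbeats 2000000 in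
lemma swap_step {F : Type*} [Field F] (r n k : ℕ) (hk : k + 1 < n) (α : Fin n → F) :
    (∑ c ∈ chainSet r n, pterm F r n (α ∘ Equiv.swap (⟨k, by omega⟩ : Fin n) ⟨k + 1, hk⟩) c)
      = ∑ c ∈ chainSet r n, pterm F r n α c := by
  classical
  set K : Fin n := ⟨k, by omega⟩ with hKdef
  set K1 : Fin n := ⟨k + 1, hk⟩ with hK1def
  have hvK : (K : ℕ) = k := rfl
  have hvK1 : (K1 : ℕ) = k + 1 := rfl
  have hKK1 : K < K1 := by simp [hKdef, hK1def, Fin.lt_def]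
  have hKne : K ≠ K1 := ne_of_lt hKK1
  have hneK_val : ∀ v : Fin n, v ≠ K → (v : ℕ) ≠ k := fun v hv he => hv (Fin.val_inj.mp he)
  have hneK1_val : ∀ v : Fin n, v ≠ K1 → (v : ℕ) ≠ k + 1 := fun v hv he => hv (Fin.val_inj.mp he)
  by_cases hαeq : α K = α K1
  · have hc : α ∘ Equiv.swap K K1 = α := by
      funext i
      rcases eq_or_ne i K with rfl | h1
      · simp [Equiv.swap_apply_left, hαeq]
      rcases eq_or_ne i K1 with rfl | h2
      · simp [Equiv.swap_apply_right, hαeq]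
      · simp [Equiv.swap_apply_of_ne_of_ne h1 h2]
    rw [hc]
  set β := α ∘ Equiv.swap K K1 with hβdef
  have hβK : β K = α K1 := by simp [hβdef]
  have hβK1 : β K1 = α K := by simp [hβdef]
  have hβo : ∀ i : Fin n, i ≠ K → i ≠ K1 → β i = α i := fun i h1 h2 => by
    simp [hβdef, Equiv.swap_apply_of_ne_of_ne h1 h2]
  set collapse : (Fin (r + 1) → Fin n) → (Fin (r + 1) → Fin n) :=
    fun c q => if c q = K1 then K else c q with hcol
  rw [← Finset.sum_fiberwise_of_maps_to (t := Finset.univ) (g := collapse)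
      (fun c _ => Finset.mem_univ _) (pterm F r n β),
    ← Finset.sum_fiberwise_of_maps_to (t := Finset.univ) (g := collapse)
      (fun c _ => Finset.mem_univ _) (pterm F r n α)]
  refine Finset.sum_congr rfl fun d _ => ?_
  rcases Finset.eq_empty_or_nonempty ((chainSet r n).filter (fun c => collapse c = d)) with
    hemp | ⟨c₀, hc₀⟩
  · rw [hemp]
    simp
  have hmem : ∀ c, c ∈ chainSet r n ↔ ((∀ i j, i ≤ j → c i ≤ c j) ∧ (c 0 : ℕ) = 0 ∧
      (c (Fin.last r) : ℕ) = n - 1) := fun c => by simp [chainSet]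
  obtain ⟨hc₀chain, hc₀col⟩ := Finset.mem_filter.mp hc₀
  obtain ⟨hc₀mono, hc₀0, hc₀l⟩ := (hmem c₀).1 hc₀chain
  have hdq : ∀ q, d q = if c₀ q = K1 then K else c₀ q := fun q => by
    rw [← hc₀col]
  have hdne1 : ∀ q, d q ≠ K1 := by
    intro q
    rw [hdq q]
    split
    · exact hKne
    · assumption
  have hdmono : ∀ p q : Fin (r + 1), p ≤ q → d p ≤ d q := by
    intro p q hpq
    have h := hc₀mono p q hpq
    rw [hdq p, hdq q]
    by_cases h1 : c₀ p = K1 <;> by_cases h2 : c₀ q = K1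
    · rw [if_pos h1, if_pos h2]
    · rw [if_pos h1, if_neg h2]
      rw [h1] at h
      exact le_trans (le_of_lt hKK1) h
    · rw [if_neg h1, if_pos h2]
      have h3 : c₀ p < K1 := lt_of_le_of_ne (by rw [← h2]; exact h) h1
      have h4 : (c₀ p : ℕ) < k + 1 := h3
      rw [Fin.le_def, hvK]
      omega
    · rw [if_neg h1, if_neg h2]
      exact h
  have hd0 : (d 0 : ℕ) = 0 := by
    rw [hdq 0, if_neg]
    · exact hc₀0
    · intro h
      rw [h] at hc₀0
      rw [hvK1] at hc₀0
      omega
  have hdlast : d (Fin.last r) ≠ K → (d (Fin.last r) : ℕ) = n - 1 := by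
    intro h
    rw [hdq (Fin.last r)] at h ⊢
    split_ifs at h ⊢ with h1
    · exact absurd rfl h
    · exact hc₀l
  have hdlastK : d (Fin.last r) = K → k + 1 = n - 1 := by
    intro h
    rw [hdq (Fin.last r)] at h
    split_ifs at h with h1
    · rw [h1] at hc₀l
      rw [hvK1] at hc₀l
      omega
    · rw [h] at hc₀l
      rw [hvK] at hc₀l
      omega
  by_cases hM : ∀ q, d q ≠ K
  · -- fiber is {d}; term is individually swap-invariant
    have hiff : ∀ j : Fin r, (¬(d (Fin.castSucc j) ≤ K ∧ K ≤ d (Fin.succ j))) ↔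
        (¬(d (Fin.castSucc j) ≤ K1 ∧ K1 ≤ d (Fin.succ j))) := by
      intro j
      have u1 := hneK_val _ (hM (Fin.castSucc j))
      have u2 := hneK1_val _ (hdne1 (Fin.castSucc j))
      have u3 := hneK_val _ (hM (Fin.succ j))
      have u4 := hneK1_val _ (hdne1 (Fin.succ j))
      rw [Fin.le_def, Fin.le_def, Fin.le_def, Fin.le_def, hvK, hvK1]
      constructor <;> intro h hx <;> exact h (by omega)
    have hFibd : (chainSet r n).filter (fun c => collapse c = d) = {d} := by
      apply Finset.ext
      intro c
      simp only [Finset.mem_filter, Finset.mem_singleton]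
      constructor
      · rintro ⟨hcchain, hccol⟩
        funext q
        have h := congrFun hccol q
        simp only [hcol] at h
        split_ifs at h with h1
        · exact absurd h.symm (hM q)
        · exact h
      · intro hcd
        rw [hcd]
        refine ⟨(hmem d).2 ⟨hdmono, hd0, hdlast (hM _)⟩, ?_⟩
        funext q
        simp only [hcol]
        rw [if_neg (hdne1 q)]
    rw [hFibd, Finset.sum_singleton, Finset.sum_singleton]
    unfold pterm
    refine Finset.prod_congr rfl fun j _ => ?_
    have hstab : ∀ i ∈ Finset.univ.filter (fun i : Fin n =>
        ¬(d (Fin.castSucc j) ≤ i ∧ i ≤ d (Fin.succ j))),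
        Equiv.swap K K1 i ∈ Finset.univ.filter (fun i : Fin n =>
        ¬(d (Fin.castSucc j) ≤ i ∧ i ≤ d (Fin.succ j))) := by
      intro i hi
      rw [Finset.mem_filter] at hi ⊢
      refine ⟨Finset.mem_univ _, ?_⟩
      rcases eq_or_ne i K with rfl | h1
      · rw [Equiv.swap_apply_left]
        exact (hiff j).1 hi.2
      rcases eq_or_ne i K1 with rfl | h2
      · rw [Equiv.swap_apply_right]
        exact (hiff j).2 hi.2
      · rw [Equiv.swap_apply_of_ne_of_ne h1 h2]
        exact hi.2
    refine Finset.prod_bij' (fun i _ => Equiv.swap K K1 i) (fun i _ => Equiv.swap K K1 i)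
      (fun i hi => hstab i hi) (fun i hi => hstab i hi)
      (fun i _ => Equiv.swap_apply_self K K1 i) (fun i _ => Equiv.swap_apply_self K K1 i)
      (fun i _ => ?_)
    rw [hβdef]
    rfl
  · push_neg at hM
    obtain ⟨p₀, hp₀⟩ := hM
    -- the interesting case
    set A : Finset (Fin r) :=
      Finset.univ.filter (fun j => d (Fin.castSucc j) = K ∨ d (Fin.succ j) = K) with hAdef
    set N : Finset (Fin r) :=
      Finset.univ.filter (fun j => ¬(d (Fin.castSucc j) ≤ K ∧ K ≤ d (Fin.succ j))) with hNdef
    have hAmem : ∀ j : Fin r, j ∈ A ↔ (d (Fin.castSucc j) = K ∨ d (Fin.succ j) = K) := by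
      intro j; simp [hAdef]
    have hNmem : ∀ j : Fin r, j ∈ N ↔ ¬(d (Fin.castSucc j) ≤ K ∧ K ≤ d (Fin.succ j)) := by
      intro j; simp [hNdef]
    set ψ : Fin r → (Fin (r + 1) → Fin n) :=
      fun m q => if d q = K ∧ (m : ℕ) < (q : ℕ) then K1 else d q with hψ
    have hψval : ∀ m q, ψ m q = d q ∨ (d q = K ∧ ψ m q = K1) := by
      intro m q
      simp only [hψ]
      split_ifs with h
      · exact Or.inr ⟨h.1, rfl⟩
      · exact Or.inl rfl
    have hψ_ge : ∀ m q, d q ≤ ψ m q := by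
      intro m q
      rcases hψval m q with h | ⟨h1, h2⟩
      · rw [h]
      · rw [h2, h1]
        exact le_of_lt hKK1
    have hle_K : ∀ m q, (ψ m q ≤ K ↔ (d q ≤ K ∧ (d q = K → (q : ℕ) ≤ (m : ℕ)))) := by
      intro m q
      simp only [hψ]
      split_ifs with h
      · constructor
        · intro hh
          exact absurd hh (not_le.2 hKK1)
        · rintro ⟨-, h2⟩
          exact absurd (h2 h.1) (by omega)
      · constructor
        · intro h1
          exact ⟨h1, fun he => le_of_not_gt (fun hlt => h ⟨he, hlt⟩)⟩
        · rintro ⟨h1, -⟩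
          exact h1
    have hge_K : ∀ m q, (K ≤ ψ m q ↔ K ≤ d q) := by
      intro m q
      rcases hψval m q with h | ⟨h1, h2⟩
      · rw [h]
      · rw [h2, h1]
        exact iff_of_true (le_of_lt hKK1) le_rfl
    have hle_K1 : ∀ m q, (ψ m q ≤ K1 ↔ d q ≤ K) := by
      intro m q
      have u := hneK1_val _ (hdne1 q)
      rcases hψval m q with h | ⟨h1, h2⟩
      · rw [h, Fin.le_def, Fin.le_def, hvK, hvK1]
        omega
      · rw [h2, h1]
        exact iff_of_true le_rfl le_rfl
    have hge_K1 : ∀ m q, (K1 ≤ ψ m q ↔ (K ≤ d q ∧ (d q = K → (m : ℕ) < (q : ℕ)))) := by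
      intro m q
      simp only [hψ]
      split_ifs with h
      · exact iff_of_true le_rfl ⟨le_of_eq h.1.symm, fun _ => h.2⟩
      · have u1 := hneK1_val _ (hdne1 q)
        constructor
        · intro h1
          have h2 : (K1 : ℕ) ≤ (d q : ℕ) := h1
          constructor
          · rw [Fin.le_def, hvK]; omega
          · intro he
            rw [he, hvK] at h2
            omega
        · rintro ⟨h1, h2⟩
          rcases eq_or_ne (d q) K with he | hne
          · exact absurd ⟨he, h2 he⟩ h
          · have := hneK_val _ hne
            have h3 : (K : ℕ) ≤ (d q : ℕ) := h1
            rw [Fin.le_def, hvK1]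
            rw [hvK] at h3
            omega
    have hcs : ∀ j : Fin r, (Fin.castSucc j : Fin (r + 1)) ≤ Fin.succ j :=
      fun j => Fin.castSucc_le_succ j
    have hAcast : ∀ m ∈ A, ∀ j : Fin r, (m : ℕ) < (j : ℕ) → j ∈ A →
        d (Fin.castSucc j) = K := by
      intro m hm j hmj hj
      rcases (hAmem j).1 hj with h | h
      · exact h
      · refine le_antisymm (h ▸ hdmono _ _ (hcs j)) ?_
        have hle : (Fin.succ m : Fin (r + 1)) ≤ Fin.castSucc j := by
          rw [Fin.le_def, Fin.val_succ, Fin.coe_castSucc]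
          omega
        rcases (hAmem m).1 hm with h' | h'
        · calc K = d (Fin.castSucc m) := h'.symm
            _ ≤ d (Fin.castSucc j) := hdmono _ _ (by
              rw [Fin.le_def, Fin.coe_castSucc, Fin.coe_castSucc]; omega)
        · calc K = d (Fin.succ m) := h'.symm
            _ ≤ d (Fin.castSucc j) := hdmono _ _ hle
    have hAsucc : ∀ m ∈ A, ∀ j : Fin r, (j : ℕ) < (m : ℕ) → j ∈ A →
        d (Fin.succ j) = K := by
      intro m hm j hjm hj
      have hle : (Fin.succ j : Fin (r + 1)) ≤ Fin.castSucc m := by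
        rw [Fin.le_def, Fin.val_succ, Fin.coe_castSucc]
        omega
      refine le_antisymm ?_ ?_
      · rcases (hAmem m).1 hm with h' | h'
        · exact h' ▸ hdmono _ _ hle
        · calc d (Fin.succ j) ≤ d (Fin.succ m) := hdmono _ _ (by
              rw [Fin.le_def, Fin.val_succ, Fin.val_succ]; omega)
            _ = K := h'
      · rcases (hAmem j).1 hj with h' | h'
        · exact h' ▸ hdmono _ _ (hcs j)
        · exact le_of_eq h'.symm
    have hsplitK : ∀ m ∈ A, Finset.univ.filter
        (fun j : Fin r => ¬(ψ m (Fin.castSucc j) ≤ K ∧ K ≤ ψ m (Fin.succ j)))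
        = N ∪ A.filter (fun j => m < j) := by
      intro m hm
      ext j
      simp only [Finset.mem_filter, Finset.mem_univ, true_and, Finset.mem_union]
      rw [hle_K m _, hge_K m _]
      constructor
      · intro h
        by_cases hg : d (Fin.castSucc j) ≤ K ∧ K ≤ d (Fin.succ j)
        · right
          have h5 : ¬(d (Fin.castSucc j) = K → ((Fin.castSucc j : Fin (r+1)) : ℕ) ≤ (m : ℕ)) :=
            fun hy => h ⟨⟨hg.1, hy⟩, hg.2⟩
          push_neg at h5
          obtain ⟨h5a, h5b⟩ := h5
          rw [Fin.coe_castSucc] at h5b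
          exact ⟨(hAmem j).2 (Or.inl h5a), Fin.lt_def.mpr (by omega)⟩
        · exact Or.inl ((hNmem j).2 hg)
      · intro h hx
        rcases h with hNj | hAj
        · exact (hNmem j).1 hNj ⟨hx.1.1, hx.2⟩
        · obtain ⟨hjA, hmj⟩ := hAj
          have hcK : d (Fin.castSucc j) = K := hAcast m hm j (Fin.lt_def.mp hmj) hjA
          have h6 := hx.1.2 hcK
          rw [Fin.coe_castSucc] at h6
          have h7 := Fin.lt_def.mp hmj
          omega
    have hsplitK1 : ∀ m ∈ A, Finset.univ.filter
        (fun j : Fin r => ¬(ψ m (Fin.castSucc j) ≤ K1 ∧ K1 ≤ ψ m (Fin.succ j)))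
        = N ∪ A.filter (fun j => j < m) := by
      intro m hm
      ext j
      simp only [Finset.mem_filter, Finset.mem_univ, true_and, Finset.mem_union]
      rw [hle_K1 m _, hge_K1 m _]
      constructor
      · intro h
        by_cases hg : d (Fin.castSucc j) ≤ K ∧ K ≤ d (Fin.succ j)
        · right
          have h5 : ¬(d (Fin.succ j) = K → (m : ℕ) < ((Fin.succ j : Fin (r+1)) : ℕ)) :=
            fun hy => h ⟨hg.1, hg.2, hy⟩
          push_neg at h5
          obtain ⟨h5a, h5b⟩ := h5
          rw [Fin.val_succ] at h5b
          exact ⟨(hAmem j).2 (Or.inr h5a), Fin.lt_def.mpr (by omega)⟩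
        · exact Or.inl ((hNmem j).2 hg)
      · intro h hx
        rcases h with hNj | hAj
        · exact (hNmem j).1 hNj ⟨hx.1, hx.2.1⟩
        · obtain ⟨hjA, hjm⟩ := hAj
          have hsK : d (Fin.succ j) = K := hAsucc m hm j (Fin.lt_def.mp hjm) hjA
          have h6 := hx.2.2 hsK
          rw [Fin.val_succ] at h6
          have h7 := Fin.lt_def.mp hjm
          omega
    have hdisj1 : ∀ m ∈ A, Disjoint N (A.filter (fun j => m < j)) := by
      intro m hm
      rw [Finset.disjoint_left]
      intro j hjN hjf
      obtain ⟨hjA, hmj⟩ := Finset.mem_filter.mp hjf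
      have hcK := hAcast m hm j (Fin.lt_def.mp hmj) hjA
      exact (hNmem j).1 hjN ⟨le_of_eq hcK, hcK ▸ hdmono _ _ (hcs j)⟩
    have hdisj2 : ∀ m ∈ A, Disjoint N (A.filter (fun j => j < m)) := by
      intro m hm
      rw [Finset.disjoint_left]
      intro j hjN hjf
      obtain ⟨hjA, hjm⟩ := Finset.mem_filter.mp hjf
      have hsK := hAsucc m hm j (Fin.lt_def.mp hjm) hjA
      exact (hNmem j).1 hjN ⟨le_trans (hdmono _ _ (hcs j)) (le_of_eq hsK), le_of_eq hsK.symm⟩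
    have hψchain : ∀ m ∈ A, ψ m ∈ chainSet r n := by
      intro m hm
      refine (hmem (ψ m)).2 ⟨?_, ?_, ?_⟩
      · intro p q hpq
        by_cases hp : d p = K ∧ (m : ℕ) < (p : ℕ)
        · have hψp : ψ m p = K1 := by simp only [hψ]; rw [if_pos hp]
          by_cases hq : d q = K
          · have hψq : ψ m q = K1 := by
              simp only [hψ]
              rw [if_pos ⟨hq, lt_of_lt_of_le hp.2 (Fin.le_def.mp hpq)⟩]
            rw [hψp, hψq]
          · have h1 : K ≤ d q := hp.1 ▸ hdmono p q hpq
            have h2 : K1 ≤ d q := by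
              have u1 := hneK_val _ hq
              have h3 : (K : ℕ) ≤ (d q : ℕ) := h1
              rw [Fin.le_def, hvK1]
              rw [hvK] at h3
              omega
            calc ψ m p = K1 := hψp
              _ ≤ d q := h2
              _ ≤ ψ m q := hψ_ge m q
        · have hψp : ψ m p = d p := by simp only [hψ]; rw [if_neg hp]
          rw [hψp]
          exact le_trans (hdmono p q hpq) (hψ_ge m q)
      · have h0 : ψ m 0 = d 0 := by
          simp only [hψ]
          rw [if_neg]
          rintro ⟨-, hlt⟩
          simp at hlt
        rw [h0]
        exact hd0
      · by_cases hdl : d (Fin.last r) = K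
        · have hl : ψ m (Fin.last r) = K1 := by
            simp only [hψ]
            rw [if_pos ⟨hdl, by rw [Fin.val_last]; exact m.isLt⟩]
          rw [hl, hvK1]
          exact hdlastK hdl
        · have hl : ψ m (Fin.last r) = d (Fin.last r) := by
            simp only [hψ]
            rw [if_neg (fun h => hdl h.1)]
          rw [hl]
          exact hdlast hdl
    have hψcol : ∀ m ∈ A, collapse (ψ m) = d := by
      intro m hm
      funext q
      simp only [hcol]
      rcases hψval m q with h | ⟨h1, h2⟩
      · rw [h, if_neg (hdne1 q)]
      · rw [h2, if_pos rfl, h1]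
    have hinj : ∀ m ∈ A, ∀ m' ∈ A, ψ m = ψ m' → m = m' := by
      have key : ∀ m ∈ A, ∀ m' ∈ A, m < m' → ψ m ≠ ψ m' := by
        intro m hm m' hm' hlt heq
        have hltv : (m : ℕ) < (m' : ℕ) := Fin.lt_def.mp hlt
        rcases (hAmem m).1 hm with hc | hc
        · have h1 : d (Fin.castSucc m') = K := hAcast m hm m' hltv hm'
          have h2 := congrFun heq (Fin.castSucc m')
          simp only [hψ] at h2
          rw [if_pos ⟨h1, by rw [Fin.coe_castSucc]; omega⟩,
            if_neg (fun h => by rw [Fin.coe_castSucc] at h; omega)] at h2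
          exact hdne1 _ h2.symm
        · have h2 := congrFun heq (Fin.succ m)
          simp only [hψ] at h2
          rw [if_pos ⟨hc, by rw [Fin.val_succ]; omega⟩,
            if_neg (fun h => by rw [Fin.val_succ] at h; omega)] at h2
          exact hdne1 _ h2.symm
      intro m hm m' hm' heq
      rcases lt_trichotomy m m' with h | h | h
      · exact absurd heq (key m hm m' hm' h)
      · exact h
      · exact absurd heq.symm (key m' hm' m hm h)
    have himg : (chainSet r n).filter (fun c => collapse c = d) = A.image ψ := by
      ext c
      simp only [Finset.mem_filter, Finset.mem_image]
      constructor
      · rintro ⟨hcchain, hccol⟩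
        obtain ⟨hcmono, hc0, hcl⟩ := (hmem c).1 hcchain
        have hcd : ∀ q, c q = d q ∨ (c q = K1 ∧ d q = K) := by
          intro q
          have h := congrFun hccol q
          simp only [hcol] at h
          split_ifs at h with h1
          · exact Or.inr ⟨h1, h.symm⟩
          · exact Or.inl h
        rcases Finset.eq_empty_or_nonempty
            (Finset.univ.filter (fun q : Fin (r+1) => c q ≠ d q)) with hU | ⟨u, hu⟩
        · -- c = d ; take m to be the maximal position where d = K
          have hceq : ∀ q, c q = d q := by
            intro q
            by_contra hne
            exact absurd (Finset.mem_filter.mpr ⟨Finset.mem_univ q, hne⟩)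
              (by rw [hU]; exact Finset.notMem_empty q)
          have hMdne : (Finset.univ.filter (fun q : Fin (r+1) => d q = K)).Nonempty :=
            ⟨p₀, Finset.mem_filter.mpr ⟨Finset.mem_univ _, hp₀⟩⟩
          set t := (Finset.univ.filter (fun q : Fin (r+1) => d q = K)).max' hMdne with ht
          have htK : d t = K :=
            (Finset.mem_filter.mp ((Finset.univ.filter
              (fun q : Fin (r+1) => d q = K)).max'_mem hMdne)).2
          have htlt : (t : ℕ) < r := by
            by_contra hge
            have htl : t = Fin.last r := by
              have := t.isLt
              apply Fin.val_inj.mp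
              simp only [Fin.val_last]
              omega
            have h1 : k + 1 = n - 1 := hdlastK (htl ▸ htK)
            have h2 : (d (Fin.last r) : ℕ) = k := by
              rw [show d (Fin.last r) = K from htl ▸ htK, hvK]
            have h3 : (c (Fin.last r)) = d (Fin.last r) := hceq _
            rw [h3] at hcl
            omega
          refine ⟨⟨(t : ℕ), htlt⟩, ?_, ?_⟩
          · apply (hAmem _).2
            apply Or.inl
            have : (Fin.castSucc (⟨(t : ℕ), htlt⟩ : Fin r)) = t := by
              apply Fin.val_inj.mp
              rw [Fin.coe_castSucc]
            rw [this]
            exact htK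
          · funext q
            simp only [hψ]
            rw [if_neg]
            · exact (hceq q).symm
            · rintro ⟨hqK, hlt⟩
              have hqle : q ≤ t := Finset.le_max' _ q
                (Finset.mem_filter.mpr ⟨Finset.mem_univ _, hqK⟩)
              have h5 := Fin.le_def.mp hqle
              have hlt' : (t : ℕ) < (q : ℕ) := hlt
              omega
        · -- c ≠ d somewhere; take m := (min position) - 1
          set U := Finset.univ.filter (fun q : Fin (r+1) => c q ≠ d q) with hU
          set j₁ := U.min' ⟨u, hu⟩ with hj₁
          have hj₁mem : c j₁ ≠ d j₁ := (Finset.mem_filter.mp (U.min'_mem ⟨u, hu⟩)).2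
          have hj₁' : c j₁ = K1 ∧ d j₁ = K := (hcd j₁).resolve_left hj₁mem
          have hj₁pos : 1 ≤ (j₁ : ℕ) := by
            by_contra h0
            have hz : j₁ = 0 := by
              apply Fin.val_inj.mp
              simp only [Fin.val_zero]
              omega
            have := hj₁'.1
            rw [hz] at this
            rw [this, hvK1] at hc0
            omega
          have hj₁le : (j₁ : ℕ) ≤ r := by omega
          refine ⟨⟨(j₁ : ℕ) - 1, by omega⟩, ?_, ?_⟩
          · apply (hAmem _).2
            apply Or.inr
            have : (Fin.succ (⟨(j₁ : ℕ) - 1, by omega⟩ : Fin r)) = j₁ := by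
              apply Fin.val_inj.mp
              rw [Fin.val_succ]
              simp only
              omega
            rw [this]
            exact hj₁'.2
          · funext q
            simp only [hψ]
            split_ifs with hq
            · -- show c q = K1
              obtain ⟨hqK, hlt⟩ := hq
              have hlt' : (j₁ : ℕ) - 1 < (q : ℕ) := hlt
              have hq1 : j₁ ≤ q := Fin.le_def.mpr (by omega)
              have hmono := hcmono j₁ q hq1
              rw [hj₁'.1] at hmono
              rcases hcd q with h | h
              · rw [h, hqK] at hmono
                exact absurd hmono (not_le.2 hKK1)
              · exact h.1.symm
            · -- show c q = d q
              by_contra hne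
              have h8 : c q = K1 ∧ d q = K := (hcd q).resolve_left (fun h => hne h.symm)
              have hqU : q ∈ U := Finset.mem_filter.mpr ⟨Finset.mem_univ _, fun h => hne h.symm⟩
              have h9 : j₁ ≤ q := U.min'_le q hqU
              have h10 := Fin.le_def.mp h9
              exact hq ⟨h8.2, show (j₁ : ℕ) - 1 < (q : ℕ) by omega⟩
      · rintro ⟨m, hmA, rfl⟩
        exact ⟨hψchain m hmA, hψcol m hmA⟩
    set Rd : MvPolynomial (Fin r) F := ∏ i ∈ (Finset.univ.erase K).erase K1, ∏ j : Fin r,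
      (if ¬(d (Fin.castSucc j) ≤ i ∧ i ≤ d (Fin.succ j)) then (X j - C (α i)) else 1) with hRd
    have hcmp : ∀ (m : Fin r) (q : Fin (r+1)) (i : Fin n), i ≠ K → i ≠ K1 →
        ((ψ m q ≤ i ↔ d q ≤ i) ∧ (i ≤ ψ m q ↔ i ≤ d q)) := by
      intro m q i h1 h2
      rcases hψval m q with h | ⟨ha, hb⟩
      · rw [h]
        exact ⟨Iff.rfl, Iff.rfl⟩
      · rw [hb, ha]
        have u1 := hneK_val i h1
        have u2 := hneK1_val i h2
        constructor <;> simp only [Fin.le_def, hvK, hvK1] <;> omega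
    have hterm : ∀ (γ : Fin n → F), (∀ i : Fin n, i ≠ K → i ≠ K1 → γ i = α i) →
        ∀ m ∈ A, pterm F r n γ (ψ m) =
          ((∏ j ∈ N, (X j - C (γ K))) * ∏ j ∈ A.filter (fun j => m < j), (X j - C (γ K))) *
          (((∏ j ∈ N, (X j - C (γ K1))) * ∏ j ∈ A.filter (fun j => j < m), (X j - C (γ K1))) * Rd) := by
      intro γ hγ m hm
      have hK_eq : (∏ j : Fin r,
            if ¬(ψ m (Fin.castSucc j) ≤ K ∧ K ≤ ψ m (Fin.succ j)) then (X j - C (γ K)) else 1)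
          = (∏ j ∈ N, (X j - C (γ K))) * ∏ j ∈ A.filter (fun j => m < j), (X j - C (γ K)) := by
        rw [← Finset.prod_filter, hsplitK m hm, Finset.prod_union (hdisj1 m hm)]
      have hK1_eq : (∏ j : Fin r,
            if ¬(ψ m (Fin.castSucc j) ≤ K1 ∧ K1 ≤ ψ m (Fin.succ j)) then (X j - C (γ K1)) else 1)
          = (∏ j ∈ N, (X j - C (γ K1))) * ∏ j ∈ A.filter (fun j => j < m), (X j - C (γ K1)) := by
        rw [← Finset.prod_filter, hsplitK1 m hm, Finset.prod_union (hdisj2 m hm)]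
      have hE_eq : (∏ i ∈ (Finset.univ.erase K).erase K1, ∏ j : Fin r,
          (if ¬(ψ m (Fin.castSucc j) ≤ i ∧ i ≤ ψ m (Fin.succ j)) then (X j - C (γ i)) else 1))
          = Rd := by
        rw [hRd]
        refine Finset.prod_congr rfl fun i hi => ?_
        obtain ⟨hi1, hi2⟩ := Finset.mem_erase.mp hi
        obtain ⟨hi3, -⟩ := Finset.mem_erase.mp hi2
        refine Finset.prod_congr rfl fun j _ => ?_
        rw [hγ i hi3 hi1]
        exact if_congr (not_congr (and_congr ((hcmp m _ i hi3 hi1).1)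
          ((hcmp m _ i hi3 hi1).2))) rfl rfl
      calc pterm F r n γ (ψ m)
          = ∏ j : Fin r, ∏ i : Fin n,
              (if ¬(ψ m (Fin.castSucc j) ≤ i ∧ i ≤ ψ m (Fin.succ j)) then (X j - C (γ i)) else 1) := by
            unfold pterm
            exact Finset.prod_congr rfl (fun j _ => Finset.prod_filter _ _)
        _ = ∏ i : Fin n, ∏ j : Fin r,
              (if ¬(ψ m (Fin.castSucc j) ≤ i ∧ i ≤ ψ m (Fin.succ j)) then (X j - C (γ i)) else 1) :=
            Finset.prod_comm
        _ = (∏ j : Fin r,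
              (if ¬(ψ m (Fin.castSucc j) ≤ K ∧ K ≤ ψ m (Fin.succ j)) then (X j - C (γ K)) else 1)) *
            ((∏ j : Fin r,
              (if ¬(ψ m (Fin.castSucc j) ≤ K1 ∧ K1 ≤ ψ m (Fin.succ j)) then (X j - C (γ K1)) else 1)) *
             ∏ i ∈ (Finset.univ.erase K).erase K1, ∏ j : Fin r,
              (if ¬(ψ m (Fin.castSucc j) ≤ i ∧ i ≤ ψ m (Fin.succ j)) then (X j - C (γ i)) else 1)) := by
            rw [← Finset.mul_prod_erase Finset.univ _ (Finset.mem_univ K),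
              ← Finset.mul_prod_erase (Finset.univ.erase K) _
                (Finset.mem_erase.mpr ⟨Ne.symm hKne, Finset.mem_univ K1⟩)]
        _ = ((∏ j ∈ N, (X j - C (γ K))) * ∏ j ∈ A.filter (fun j => m < j), (X j - C (γ K))) *
          (((∏ j ∈ N, (X j - C (γ K1))) * ∏ j ∈ A.filter (fun j => j < m), (X j - C (γ K1))) * Rd) := by
            rw [hK_eq, hK1_eq, hE_eq]
    rw [himg, Finset.sum_image hinj, Finset.sum_image hinj]
    have hCne : (C (α K1) : MvPolynomial (Fin r) F) ≠ C (α K) := fun h =>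
      hαeq ((MvPolynomial.C_inj F _ _).mp h).symm
    have hkey : ∑ m ∈ A, (∏ j ∈ A.filter (fun j => j < m),
            ((X j : MvPolynomial (Fin r) F) - C (α K))) *
          ∏ j ∈ A.filter (fun j => m < j), (X j - C (α K1))
        = ∑ m ∈ A, (∏ j ∈ A.filter (fun j => j < m),
            ((X j : MvPolynomial (Fin r) F) - C (α K1))) *
          ∏ j ∈ A.filter (fun j => m < j), (X j - C (α K)) :=
      keySum A (fun j => X j) (C (α K1)) (C (α K)) hCne
    calc ∑ m ∈ A, pterm F r n β (ψ m)
        = ∑ m ∈ A, ((((∏ j ∈ N, (X j - C (α K))) * ∏ j ∈ N, (X j - C (α K1))) * Rd) *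
            ((∏ j ∈ A.filter (fun j => j < m), (X j - C (α K))) *
             ∏ j ∈ A.filter (fun j => m < j), (X j - C (α K1)))) := by
          refine Finset.sum_congr rfl fun m hm => ?_
          rw [hterm β hβo m hm, hβK, hβK1]
          ring
      _ = (((∏ j ∈ N, (X j - C (α K))) * ∏ j ∈ N, (X j - C (α K1))) * Rd) *
            ∑ m ∈ A, ((∏ j ∈ A.filter (fun j => j < m), (X j - C (α K))) *
             ∏ j ∈ A.filter (fun j => m < j), (X j - C (α K1))) := by
          rw [Finset.mul_sum]
      _ = (((∏ j ∈ N, (X j - C (α K))) * ∏ j ∈ N, (X j - C (α K1))) * Rd) *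
            ∑ m ∈ A, ((∏ j ∈ A.filter (fun j => j < m), (X j - C (α K1))) *
             ∏ j ∈ A.filter (fun j => m < j), (X j - C (α K))) := by rw [hkey]
      _ = ∑ m ∈ A, ((((∏ j ∈ N, (X j - C (α K))) * ∏ j ∈ N, (X j - C (α K1))) * Rd) *
            ((∏ j ∈ A.filter (fun j => j < m), (X j - C (α K1))) *
             ∏ j ∈ A.filter (fun j => m < j), (X j - C (α K)))) := by rw [Finset.mul_sum]
      _ = ∑ m ∈ A, pterm F r n α (ψ m) := by
          refine Finset.sum_congr rfl fun m hm => ?_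
          rw [hterm α (fun _ _ _ => rfl) m hm]
          ring

end FaAux

namespace FaAux

lemma fa_eq_s6 {F : Type*} [Field F] (r n : ℕ) (γ : Fin n → F) :
    fa F r n γ = ∑ c ∈ chainSet r n, pterm F r n γ c := rfl

lemma fa_swap {F : Type*} [Field F] (r n k : ℕ) (hk : k + 1 < n) (α : Fin n → F) :
    fa F r n (α ∘ Equiv.swap (⟨k, by omega⟩ : Fin n) ⟨k + 1, hk⟩) = fa F r n α := by
  rw [fa_eq_s6, fa_eq_s6]
  exact swap_step r n k hk α

end FaAux

theorem fa_root_order_independent (F : Type*) [Field F] (r n : ℕ) (hn : 1 ≤ n)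
    (α : Fin n → F) (σ : Equiv.Perm (Fin n)) :
    fa F r n (α ∘ σ) = fa F r n α := by
  obtain ⟨n', rfl⟩ : ∃ n', n = n' + 1 := ⟨n - 1, by omega⟩
  have hσ : σ ∈ Submonoid.closure
      (Set.range fun i : Fin n' => Equiv.swap i.castSucc i.succ) := by
    rw [Equiv.Perm.mclosure_swap_castSucc_succ]
    trivial
  induction hσ using Submonoid.closure_induction generalizing α with
  | mem τ hτ =>
    obtain ⟨i, rfl⟩ := hτ
    have hik : (i : ℕ) + 1 < n' + 1 := by omega
    have h1 : (Fin.castSucc i : Fin (n' + 1)) = ⟨(i : ℕ), by omega⟩ := rfl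
    have h2 : (Fin.succ i : Fin (n' + 1)) = ⟨(i : ℕ) + 1, hik⟩ := rfl
    show fa F r (n' + 1) (α ∘ ⇑(Equiv.swap (Fin.castSucc i) (Fin.succ i))) = fa F r (n' + 1) α
    rw [h1, h2]
    exact FaAux.fa_swap r (n' + 1) (i : ℕ) hik α
  | one =>
    have : α ∘ ⇑(1 : Equiv.Perm (Fin (n' + 1))) = α := rfl
    rw [this]
  | mul x y hx hy ihx ihy =>
    have h1 : α ∘ ⇑(x * y) = (α ∘ ⇑x) ∘ ⇑y := rfl
    rw [h1, ihy (α ∘ ⇑x), ihx α]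
end

section
/- Let a = Σ_{i=0}^n a_i T^i be a monic polynomial of degree n ≥ 1 over a field F, with roots α_1,…,α_n in an algebraic closure. For the case r = 2, the polynomial f_a satisfies f_a(T_1, T_2) = Σ_{i=1}^n a_i Σ_{j=1}^i T_1^{j-1} T_2^{i-j}. -/
open Finset MvPolynomial in
/-- For `r = 2`, the sum defining `fa` is indexed by the middle element of the chain. -/
lemma fa_two_eq (F : Type*) [Field F] (n : ℕ) (hn : 1 ≤ n) (α : Fin n → F) :
    fa F 2 n α = ∑ k ∈ Finset.range n,
      (∏ i ∈ Finset.univ.filter (fun i : Fin n => k < i.1), (X 0 - C (α i))) *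
      ∏ i ∈ Finset.univ.filter (fun i : Fin n => i.1 < k), (X 1 - C (α i)) := by
  rw [← Fin.sum_univ_eq_sum_range (fun k =>
      (∏ i ∈ Finset.univ.filter (fun i : Fin n => k < i.1), (X 0 - C (α i))) *
      ∏ i ∈ Finset.univ.filter (fun i : Fin n => i.1 < k), (X 1 - C (α i))) n]
  unfold fa
  refine Finset.sum_nbij' (fun c => c 1)
    (fun k => ![⟨0, by omega⟩, k, ⟨n - 1, by omega⟩]) (by simp) ?_ ?_ (by simp) ?_
  · intro k _
    simp only [mem_filter, mem_univ, true_and]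
    refine ⟨?_, by simp, by simp [Fin.last]⟩
    intro i j hij
    fin_cases i <;> fin_cases j <;>
      simp_all [Fin.le_def] <;> omega
  · intro c hc
    simp only [mem_filter, mem_univ, true_and] at hc
    obtain ⟨-, h0, hl⟩ := hc
    have h2 : (c 2 : ℕ) = n - 1 := hl
    funext i
    refine Fin.cases ?_ (fun i => Fin.cases ?_ (fun i => Fin.cases ?_ (fun i => i.elim0) i) i) i
    · simp only [Matrix.cons_val_zero]
      exact Fin.ext h0.symm
    · rfl
    · simp only [Matrix.cons_val_succ]
      exact Fin.ext h2.symm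
  · intro c hc
    simp only [mem_filter, mem_univ, true_and] at hc
    obtain ⟨hmono, h0, hl⟩ := hc
    have h2 : (c 2 : ℕ) = n - 1 := hl
    rw [Fin.prod_univ_two]
    have e0 : Finset.univ.filter (fun i : Fin n =>
          ¬(c (Fin.castSucc 0) ≤ i ∧ i ≤ c (Fin.succ 0))) =
        Finset.univ.filter (fun i : Fin n => (c 1 : ℕ) < i.1) := by
      apply Finset.filter_congr
      intro i _
      rw [Fin.castSucc_zero, Fin.succ_zero_eq_one]
      simp only [Fin.le_def, not_and, not_le, eq_iff_iff, Fin.lt_def]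
      constructor
      · intro h; exact h (by omega)
      · intro h _; omega
    have e1 : Finset.univ.filter (fun i : Fin n =>
          ¬(c (Fin.castSucc 1) ≤ i ∧ i ≤ c (Fin.succ 1))) =
        Finset.univ.filter (fun i : Fin n => i.1 < (c 1 : ℕ)) := by
      apply Finset.filter_congr
      intro i _
      rw [Fin.castSucc_one, Fin.succ_one_eq_two]
      simp only [Fin.le_def, not_and, not_le, eq_iff_iff, Fin.lt_def]
      have := i.isLt
      constructor
      · intro h
        by_contra hcon
        push_neg at hcon
        have := h (by omega)
        omega
      · intro h h1; omega
    rw [e0, e1]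

open Finset MvPolynomial in
/-- Telescoping identity for the `r = 2` sum. -/
lemma fa_two_telescope (F : Type*) [Field F] (n : ℕ) (α : Fin n → F) :
    (X 0 - X 1 : MvPolynomial (Fin 2) F) * ∑ k ∈ Finset.range n,
      (∏ i ∈ Finset.univ.filter (fun i : Fin n => k < i.1), (X 0 - C (α i))) *
      ∏ i ∈ Finset.univ.filter (fun i : Fin n => i.1 < k), (X 1 - C (α i)) =
    (∏ i, (X 0 - C (α i))) - ∏ i, (X (1 : Fin 2) - C (α i)) := by
  set g : ℕ → MvPolynomial (Fin 2) F := fun k =>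
    (∏ i ∈ Finset.univ.filter (fun i : Fin n => k ≤ i.1), (X 0 - C (α i))) *
    ∏ i ∈ Finset.univ.filter (fun i : Fin n => i.1 < k), (X 1 - C (α i)) with hg
  have key : ∀ k ∈ Finset.range n, (X 0 - X 1 : MvPolynomial (Fin 2) F) *
      ((∏ i ∈ Finset.univ.filter (fun i : Fin n => k < i.1), (X 0 - C (α i))) *
       ∏ i ∈ Finset.univ.filter (fun i : Fin n => i.1 < k), (X 1 - C (α i))) =
      g k - g (k + 1) := by
    intro k hk
    rw [Finset.mem_range] at hk
    have e0 : Finset.univ.filter (fun i : Fin n => k ≤ i.1) =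
        insert ⟨k, hk⟩ (Finset.univ.filter (fun i : Fin n => k < i.1)) := by
      ext i
      simp [Fin.ext_iff]
      omega
    have e1 : Finset.univ.filter (fun i : Fin n => i.1 < k + 1) =
        insert ⟨k, hk⟩ (Finset.univ.filter (fun i : Fin n => i.1 < k)) := by
      ext i
      simp [Fin.ext_iff]
      omega
    have n0 : (⟨k, hk⟩ : Fin n) ∉ Finset.univ.filter (fun i : Fin n => k < i.1) := by simp
    have n1 : (⟨k, hk⟩ : Fin n) ∉ Finset.univ.filter (fun i : Fin n => i.1 < k) := by simp
    have e2 : Finset.univ.filter (fun i : Fin n => k + 1 ≤ i.1) =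
        Finset.univ.filter (fun i : Fin n => k < i.1) := by
      ext i
      simp
    rw [hg]
    simp only [e0, e1, e2, Finset.prod_insert n0, Finset.prod_insert n1]
    ring
  rw [Finset.mul_sum, Finset.sum_congr rfl key, Finset.sum_range_sub' g]
  have g0 : g 0 = ∏ i, (X 0 - C (α i)) := by
    rw [hg]
    simp
  have gn : g n = ∏ i, (X (1 : Fin 2) - C (α i)) := by
    rw [hg]
    have : Finset.univ.filter (fun i : Fin n => n ≤ i.1) = ∅ := by
      ext i; simp
    have h2 : Finset.univ.filter (fun i : Fin n => i.1 < n) = Finset.univ := by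
      ext i; simp [i.isLt]
    simp only [this, h2, Finset.prod_empty, one_mul]
  rw [g0, gn]

open Finset MvPolynomial in
/-- The right-hand side, multiplied by `X 0 - X 1`, telescopes to `a(X 0) - a(X 1)`. -/
lemma fa_two_rhs (F : Type*) [Field F] (n : ℕ) (hn : 1 ≤ n) (α : Fin n → F)
    (a : Polynomial F) (ha : a = ∏ i, (Polynomial.X - Polynomial.C (α i))) :
    (X 0 - X 1 : MvPolynomial (Fin 2) F) *
      (∑ i ∈ Finset.Icc 1 n, MvPolynomial.C (a.coeff i) *
        ∑ j ∈ Finset.Icc 1 i,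
          MvPolynomial.X (0 : Fin 2) ^ (j - 1) * MvPolynomial.X (1 : Fin 2) ^ (i - j)) =
    (∏ i, (X 0 - C (α i))) - ∏ i, (X (1 : Fin 2) - C (α i)) := by
  have hdeg : a.natDegree < n + 1 := by
    rw [ha]
    refine Nat.lt_succ_of_le (le_trans (Polynomial.natDegree_prod_le _ _) ?_)
    simp
  have hS : ∀ i : ℕ, (X 0 - X 1 : MvPolynomial (Fin 2) F) *
      ∑ j ∈ Finset.Icc 1 i, X (0 : Fin 2) ^ (j - 1) * X (1 : Fin 2) ^ (i - j) =
      X (0 : Fin 2) ^ i - X (1 : Fin 2) ^ i := by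
    intro i
    have : ∑ j ∈ Finset.Icc 1 i, (X (0 : Fin 2) : MvPolynomial (Fin 2) F) ^ (j - 1) *
        X (1 : Fin 2) ^ (i - j) =
        ∑ j ∈ Finset.range i, X (0 : Fin 2) ^ j * X (1 : Fin 2) ^ (i - 1 - j) := by
      refine Finset.sum_nbij' (fun j => j - 1) (fun j => j + 1) ?_ ?_ ?_ ?_ ?_
      · intro j hj; rw [Finset.mem_Icc] at hj; rw [Finset.mem_range]; omega
      · intro j hj; rw [Finset.mem_range] at hj; rw [Finset.mem_Icc]; omega
      · intro j hj; rw [Finset.mem_Icc] at hj; omega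
      · intro j hj; omega
      · intro j hj
        rw [Finset.mem_Icc] at hj
        have : i - j = i - 1 - (j - 1) := by omega
        rw [this]
    rw [this, ← geom_sum₂_mul (X (0 : Fin 2) : MvPolynomial (Fin 2) F) (X 1) i]
    ring
  rw [Finset.mul_sum]
  have : ∀ i ∈ Finset.Icc 1 n, (X 0 - X 1 : MvPolynomial (Fin 2) F) *
      (C (a.coeff i) * ∑ j ∈ Finset.Icc 1 i, X (0:Fin 2) ^ (j-1) * X (1:Fin 2) ^ (i-j)) =
      C (a.coeff i) * (X (0:Fin 2) ^ i - X (1:Fin 2) ^ i) := by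
    intro i _
    rw [← hS i]; ring
  rw [Finset.sum_congr rfl this]
  have hins : Finset.range (n + 1) = insert 0 (Finset.Icc 1 n) := by
    ext i
    simp [Finset.mem_range, Finset.mem_Icc]
    omega
  have key : ∑ i ∈ Finset.Icc 1 n,
      (C (a.coeff i) : MvPolynomial (Fin 2) F) * (X (0:Fin 2) ^ i - X (1:Fin 2) ^ i) =
      ∑ i ∈ Finset.range (n+1), C (a.coeff i) * (X (0:Fin 2) ^ i - X (1:Fin 2) ^ i) := by
    rw [hins, Finset.sum_insert (by simp)]
    simp
  rw [key]
  have ev : ∀ x : MvPolynomial (Fin 2) F,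
      ∑ i ∈ Finset.range (n+1), (C (a.coeff i) : MvPolynomial (Fin 2) F) * x ^ i =
      Polynomial.aeval x a := by
    intro x
    rw [Polynomial.aeval_eq_sum_range' hdeg]
    exact Finset.sum_congr rfl fun i _ => (MvPolynomial.smul_eq_C_mul _ _).symm
  have evp : ∀ x : MvPolynomial (Fin 2) F,
      (Polynomial.aeval x a : MvPolynomial (Fin 2) F) = ∏ i, (x - C (α i)) := by
    intro x
    rw [ha]
    simp [MvPolynomial.algebraMap_eq]
  calc ∑ i ∈ Finset.range (n+1),
        (C (a.coeff i) : MvPolynomial (Fin 2) F) * (X (0:Fin 2) ^ i - X (1:Fin 2) ^ i)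
      = (∑ i ∈ Finset.range (n+1), C (a.coeff i) * X (0:Fin 2) ^ i) -
        ∑ i ∈ Finset.range (n+1), C (a.coeff i) * X (1:Fin 2) ^ i := by
        rw [← Finset.sum_sub_distrib]
        exact Finset.sum_congr rfl fun i _ => by ring
    _ = _ := by rw [ev, ev, evp, evp]

theorem fa_rank_two (F : Type*) [Field F] (n : ℕ) (hn : 1 ≤ n) (α : Fin n → F)
    (a : Polynomial F) (ha : a = ∏ i, (Polynomial.X - Polynomial.C (α i))) :
    fa F 2 n α = ∑ i ∈ Finset.Icc 1 n, MvPolynomial.C (a.coeff i) *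
      ∑ j ∈ Finset.Icc 1 i,
        MvPolynomial.X (0 : Fin 2) ^ (j - 1) * MvPolynomial.X (1 : Fin 2) ^ (i - j) := by
  have hne : (MvPolynomial.X 0 - MvPolynomial.X 1 : MvPolynomial (Fin 2) F) ≠ 0 :=
    sub_ne_zero_of_ne (MvPolynomial.X_injective.ne (by decide))
  refine mul_left_cancel₀ hne ?_
  rw [fa_two_eq F n hn α, fa_two_telescope F n α, fa_two_rhs F n hn α a ha]
end
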